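/- arXiv:0805.0268 — 5 statements merged into one kernel-verified Lean document; each statement's English description precedes it below -/
import Mathlib

section
/- Let (X_n)_{n≥1} be independent identically distributed random variables uniform on {0,1}, let (Y_i)_{i≥0} be the ABSG internal state sequence driven by X (Y_0 = ∅, Y_i = M(Y_{i−1}, X_i)), let H_j be the index of the j-th occurrence of ∅ in (Y_i)_{i≥1} (with H_0 = 0), Q_j := H_j − H_{j−1} − 2, and let (Z_j)_{j≥1} be the ABSG output bits. Then for every N ≥ 1 and every binary string z_1,…,z_N occurring with positive probability, conditionally on Z_1 = z_1, …, Z_N = z_N the random variables Q_1, …, Q_N are independent and satisfy P(Q_i = q | Z_1^N = z_1^N) = (1/2)^{q+1} for every q ∈ ℕ and every 1 ≤ i ≤ N; i.e., P(Q_1 = q_1, …, Q_N = q_N | Z_1^N = z_1^N) = ∏_{i=1}^N (1/2)^{q_i+1} for all q_1,…,q_N ∈ ℕ. -/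
open MeasureTheory ProbabilityTheory ENNReal

/-- ABSG state alphabet `{∅, 0, 1}` modeled as `Option Bool` (`none` is ∅), with
transition map `M(∅,b)=b`, `M(s,b) = ∅` if `s = b` and `= s` otherwise. -/
def absgM : Option Bool → Bool → Option Bool
  | none, b => some b
  | some s, b => if s = b then none else some s

/-- ABSG internal state sequence: `y 0 = ∅`, `y (i+1) = M (y i) (x (i+1))`. -/
def absgY (x : ℕ → Bool) : ℕ → Option Bool
  | 0 => none
  | i + 1 => absgM (absgY x i) (x (i + 1))

/-- `absgH x j` is the index of the `j`-th occurrence of ∅ in `(y i)_{i≥1}`, with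
`absgH x 0 = 0` (and junk value `0` via `sInf ∅` if there is no such occurrence). -/
noncomputable def absgH (x : ℕ → Bool) : ℕ → ℕ
  | 0 => 0
  | j + 1 => sInf {i | absgH x j < i ∧ absgY x i = none}

/-- `absgQ x j = h j − h (j−1) − 2`. -/
noncomputable def absgQ (x : ℕ → Bool) (j : ℕ) : ℕ :=
  absgH x j - absgH x (j - 1) - 2

/-- The `j`-th ABSG output bit: `z j = y (h j − 1)` if `q j = 0`, and its complement
otherwise. -/
noncomputable def absgZ (x : ℕ → Bool) (j : ℕ) : Bool :=
  if absgQ x j = 0 then (absgY x (absgH x j - 1)).getD false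
  else !(absgY x (absgH x j - 1)).getD false

namespace ABSG

/-- leading/trailing bit of a block with gap `m` producing output `z`. -/
def sb (z : Bool) (m : ℕ) : Bool := if m = 0 then z else !z

/-- the `r`-th bit (0-based) of a block with gap `m` and output `z`. -/
def wAt (z : Bool) (m : ℕ) (r : ℕ) : Bool :=
  if r = 0 ∨ r = m + 1 then sb z m else !(sb z m)

/-- total length of the first `j` blocks. -/
def Lsum (q : ℕ → ℕ) (j : ℕ) : ℕ := ∑ i ∈ Finset.Icc 1 j, (q i + 2)

lemma Lsum_zero (q : ℕ → ℕ) : Lsum q 0 = 0 := by simp [Lsum]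

lemma Lsum_succ (q : ℕ → ℕ) (j : ℕ) :
    Lsum q (j + 1) = Lsum q j + (q (j + 1) + 2) := by
  rw [Lsum, Lsum, Finset.sum_Icc_succ_top (by omega)]

lemma Lsum_mono (q : ℕ → ℕ) : Monotone (Lsum q) := by
  intro a b hab
  exact Finset.sum_le_sum_of_subset (Finset.Icc_subset_Icc le_rfl hab)

lemma Lsum_pred_add (q : ℕ → ℕ) {j : ℕ} (hj : 1 ≤ j) :
    Lsum q j = Lsum q (j - 1) + (q j + 2) := by
  obtain ⟨j', rfl⟩ : ∃ j', j = j' + 1 := ⟨j - 1, by omega⟩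
  simpa using Lsum_succ q j'

/-- the block-structure specification of the input prefix. -/
def BlockSpec (x : ℕ → Bool) (z : ℕ → Bool) (q : ℕ → ℕ) (N : ℕ) : Prop :=
  ∀ j, 1 ≤ j → j ≤ N → ∀ r, r ≤ q j + 1 →
    x (Lsum q (j - 1) + 1 + r) = wAt (z j) (q j) r

lemma blockSpec_congr {x z q q' N} (h : ∀ i, 1 ≤ i → i ≤ N → q i = q' i) :
    BlockSpec x z q N → BlockSpec x z q' N := by
  intro hx j hj1 hjN r hr
  have hq : q j = q' j := h j hj1 hjN
  have hL : Lsum q (j - 1) = Lsum q' (j - 1) := by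
    apply Finset.sum_congr rfl
    intro i hi
    simp only [Finset.mem_Icc] at hi
    rw [h i hi.1 (by omega)]
  rw [← hL, ← hq, hx j hj1 hjN r (by omega)]

lemma absgY_succ (x : ℕ → Bool) (i : ℕ) :
    absgY x (i + 1) = absgM (absgY x i) (x (i + 1)) := rfl

lemma absgM_some_ne {s t : Bool} (h : t ≠ s) : absgM (some s) t = some s := by
  simp [absgM, Ne.symm h]

lemma absgM_some_eq (s : Bool) : absgM (some s) s = none := by simp [absgM]

/-- Forward, one block: from a reset at `a`, a block `s (!s)^m s` drives the state. -/
lemma block_fwd {x : ℕ → Bool} {a : ℕ} {s : Bool} {m : ℕ}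
    (hy : absgY x a = none)
    (h0 : x (a + 1) = s)
    (hmid : ∀ r, 1 ≤ r → r ≤ m → x (a + 1 + r) = !s)
    (hend : x (a + m + 2) = s) :
    (∀ r, 1 ≤ r → r ≤ m + 1 → absgY x (a + r) = some s) ∧
      absgY x (a + m + 2) = none := by
  have key : ∀ r, r ≤ m → absgY x (a + 1 + r) = some s := by
    intro r
    induction r with
    | zero =>
      intro _
      have : absgY x (a + 1) = absgM (absgY x a) (x (a + 1)) := rfl
      simp only [Nat.add_zero]
      rw [this, hy, h0]; rfl
    | succ r ih =>
      intro hr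
      have h1 : absgY x (a + 1 + r) = some s := ih (by omega)
      have h2 : x (a + 1 + (r + 1)) = !s := hmid (r + 1) (by omega) hr
      have : absgY x (a + 1 + (r + 1)) = absgM (absgY x (a + 1 + r)) (x (a + 1 + (r + 1))) := by
        rw [show a + 1 + (r + 1) = (a + 1 + r) + 1 by omega]
        rfl
      rw [this, h1, h2]
      exact absgM_some_ne (by simp)
  constructor
  · intro r hr1 hr2
    have := key (r - 1) (by omega)
    rwa [show a + 1 + (r - 1) = a + r by omega] at this
  · have h1 : absgY x (a + m + 1) = some s := by
      have := key m le_rfl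
      rwa [show a + 1 + m = a + m + 1 by omega] at this
    have : absgY x (a + m + 2) = absgM (absgY x (a + m + 1)) (x (a + m + 2)) := rfl
    rw [this, h1, hend, absgM_some_eq]

lemma block_fwd_sInf {x : ℕ → Bool} {a : ℕ} {s : Bool} {m : ℕ}
    (hmid : ∀ r, 1 ≤ r → r ≤ m + 1 → absgY x (a + r) = some s)
    (hend : absgY x (a + m + 2) = none) :
    sInf {i | a < i ∧ absgY x i = none} = a + m + 2 := by
  have hmem : a + m + 2 ∈ {i | a < i ∧ absgY x i = none} := ⟨by omega, hend⟩
  refine le_antisymm (Nat.sInf_le hmem) ?_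
  by_contra hlt
  push_neg at hlt
  have hinf := Nat.sInf_mem (⟨_, hmem⟩ : {i | a < i ∧ absgY x i = none}.Nonempty)
  obtain ⟨h1, h2⟩ := hinf
  set b := sInf {i | a < i ∧ absgY x i = none}
  have : absgY x b = some s := by
    have := hmid (b - a) (by omega) (by omega)
    rwa [show a + (b - a) = b by omega] at this
  rw [this] at h2
  exact Option.some_ne_none _ h2

lemma wAt_zero (z : Bool) (m : ℕ) : wAt z m 0 = sb z m := by simp [wAt]

lemma wAt_last (z : Bool) (m : ℕ) : wAt z m (m + 1) = sb z m := by simp [wAt]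

lemma wAt_mid (z : Bool) (m : ℕ) {r : ℕ} (h1 : 1 ≤ r) (h2 : r ≤ m) :
    wAt z m r = !(sb z m) := by
  have : ¬(r = 0 ∨ r = m + 1) := by omega
  simp [wAt, this]

/-- Forward: if the input prefix has the block structure, then `H`, `Q`, `Z` are as
prescribed. -/
lemma fwd {x z : ℕ → Bool} {q : ℕ → ℕ} {N : ℕ} (hx : BlockSpec x z q N) :
    (∀ j, j ≤ N → absgH x j = Lsum q j ∧ absgY x (Lsum q j) = none) ∧
    (∀ j, 1 ≤ j → j ≤ N → absgQ x j = q j ∧ absgZ x j = z j) := by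
  have main : ∀ j, j ≤ N → absgH x j = Lsum q j ∧ absgY x (Lsum q j) = none := by
    intro j
    induction j with
    | zero => intro _; exact ⟨rfl, by simp [Lsum_zero]; rfl⟩
    | succ j ih =>
      intro hj
      obtain ⟨hH, hY⟩ := ih (by omega)
      set a := Lsum q j with ha
      set m := q (j + 1) with hm
      set s := sb (z (j + 1)) m with hs
      have hspec := hx (j + 1) (by omega) hj
      simp only [Nat.add_sub_cancel] at hspec
      have h0 : x (a + 1) = s := by
        have := hspec 0 (by omega); rwa [wAt_zero] at this
      have hmid : ∀ r, 1 ≤ r → r ≤ m → x (a + 1 + r) = !s := by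
        intro r h1 h2
        have := hspec r (by omega); rwa [wAt_mid _ _ h1 h2] at this
      have hend : x (a + m + 2) = s := by
        have := hspec (m + 1) le_rfl
        rwa [wAt_last, show a + 1 + (m + 1) = a + m + 2 by omega] at this
      obtain ⟨hsome, hnone⟩ := block_fwd hY h0 hmid hend
      have hLs : Lsum q (j + 1) = a + m + 2 := by rw [Lsum_succ]; omega
      constructor
      · show sInf {i | absgH x j < i ∧ absgY x i = none} = Lsum q (j + 1)
        rw [hH, hLs]
        exact block_fwd_sInf hsome hnone
      · rw [hLs]; exact hnone
  refine ⟨main, fun j hj1 hjN => ?_⟩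
  have hHj := (main j hjN).1
  have hHj1 := (main (j - 1) (by omega)).1
  have hL : Lsum q j = Lsum q (j - 1) + (q j + 2) := Lsum_pred_add q hj1
  have hQ : absgQ x j = q j := by
    unfold absgQ; rw [hHj, hHj1]; omega
  refine ⟨hQ, ?_⟩
  -- compute Z
  set a := Lsum q (j - 1) with ha
  set m := q j with hm
  have hspec := hx j hj1 hjN
  have hY0 : absgY x a = none := (main (j - 1) (by omega)).2
  have h0 : x (a + 1) = sb (z j) m := by
    have := hspec 0 (by omega); rwa [wAt_zero] at this
  have hmid : ∀ r, 1 ≤ r → r ≤ m → x (a + 1 + r) = !(sb (z j) m) := by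
    intro r h1 h2
    have := hspec r (by omega); rwa [wAt_mid _ _ h1 h2] at this
  have hend : x (a + m + 2) = sb (z j) m := by
    have := hspec (m + 1) le_rfl
    rwa [wAt_last, show a + 1 + (m + 1) = a + m + 2 by omega] at this
  obtain ⟨hsome, _⟩ := block_fwd hY0 h0 hmid hend
  have hYH : absgY x (absgH x j - 1) = some (sb (z j) m) := by
    rw [hHj, hL, show a + (m + 2) - 1 = a + (m + 1) by omega]
    exact hsome (m + 1) (by omega) le_rfl
  unfold absgZ
  rw [hQ, hYH]
  by_cases hm0 : m = 0 <;> simp [hm0, sb]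

lemma bool_ne_iff {a b : Bool} : a ≠ b ↔ a = !b := by cases a <;> cases b <;> simp

/-- Backward, one block. -/
lemma block_bwd {x : ℕ → Bool} {a : ℕ}
    (hy : absgY x a = none)
    (hne : {i | a < i ∧ absgY x i = none}.Nonempty) :
    ∃ m, sInf {i | a < i ∧ absgY x i = none} = a + m + 2 ∧
      absgY x (a + m + 1) = some (x (a + 1)) ∧
      (∀ r, 1 ≤ r → r ≤ m → x (a + 1 + r) = !(x (a + 1))) ∧
      x (a + m + 2) = x (a + 1) := by
  obtain ⟨hab, hbnone⟩ := Nat.sInf_mem hne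
  set s := x (a + 1) with hs
  set b := sInf {i | a < i ∧ absgY x i = none} with hb
  have hmin : ∀ i, a < i → i < b → absgY x i ≠ none := by
    intro i h1 h2 h3
    have hmem : i ∈ {i | a < i ∧ absgY x i = none} := ⟨h1, h3⟩
    have := Nat.sInf_le hmem
    omega
  have hy1 : absgY x (a + 1) = some s := by
    have h : absgY x (a + 1) = absgM (absgY x a) (x (a + 1)) := rfl
    rw [h, hy]; rfl
  have hb2 : a + 2 ≤ b := by
    have hne1 : b ≠ a + 1 := by
      intro h; rw [h, hy1] at hbnone; exact Option.some_ne_none _ hbnone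
    omega
  have claim : ∀ r, 1 ≤ r → a + r < b →
      absgY x (a + r) = some s ∧ (2 ≤ r → x (a + r) = !s) := by
    intro r
    induction r with
    | zero => omega
    | succ r ih =>
      intro _ hlt
      rcases Nat.eq_zero_or_pos r with hr0 | hrpos
      · subst hr0; exact ⟨hy1, by omega⟩
      · have h1 : absgY x (a + r) = some s := (ih (by omega) (by omega)).1
        have hstep : absgY x (a + (r + 1)) = absgM (some s) (x (a + (r + 1))) := by
          rw [show a + (r + 1) = (a + r) + 1 by omega, absgY_succ, h1,
            show a + r + 1 = a + (r + 1) by omega]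
        have hne' : absgY x (a + (r + 1)) ≠ none := hmin _ (by omega) hlt
        have hxne : x (a + (r + 1)) ≠ s := by
          intro hxx; rw [hstep, hxx, absgM_some_eq] at hne'; exact hne' rfl
        have hxval : x (a + (r + 1)) = !s := bool_ne_iff.mp hxne
        refine ⟨?_, fun _ => hxval⟩
        rw [hstep, hxval, absgM_some_ne (by simp)]
  refine ⟨b - a - 2, by omega, ?_, ?_, ?_⟩
  · have := (claim (b - a - 1) (by omega) (by omega)).1
    rwa [show a + (b - a - 2) + 1 = a + (b - a - 1) by omega]
  · intro r h1 h2
    have := (claim (r + 1) (by omega) (by omega)).2 (by omega)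
    rwa [show a + (r + 1) = a + 1 + r by omega] at this
  · have hprev : absgY x (a + (b - a - 1)) = some s := (claim _ (by omega) (by omega)).1
    have hstep : absgY x b = absgM (some s) (x b) := by
      rw [show b = (a + (b - a - 1)) + 1 by omega, absgY_succ, hprev,
        show a + (b - a - 1) + 1 = b by omega]
    rw [hstep] at hbnone
    have hxb : x b = s := by
      by_contra hne'
      rw [absgM_some_ne hne'] at hbnone
      exact Option.some_ne_none _ hbnone
    rwa [show a + (b - a - 2) + 2 = b by omega]

/-- Backward: on good inputs with prescribed outputs, the input prefix has the block
structure with gaps given by the actual `Q`. -/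
lemma bwd {x z : ℕ → Bool} {N : ℕ}
    (hgood : ∀ n, ∃ i, n < i ∧ absgY x i = none)
    (hz : ∀ j, 1 ≤ j → j ≤ N → absgZ x j = z j) :
    BlockSpec x z (absgQ x) N := by
  have main : ∀ j, absgH x j = Lsum (absgQ x) j ∧ absgY x (absgH x j) = none := by
    intro j
    induction j with
    | zero => exact ⟨(Lsum_zero _).symm, rfl⟩
    | succ j ih =>
      obtain ⟨hH, hY'⟩ := ih
      have hY : absgY x (absgH x j) = none := hY'
      have hne : {i | absgH x j < i ∧ absgY x i = none}.Nonempty := by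
        obtain ⟨i, h1, h2⟩ := hgood (absgH x j); exact ⟨i, h1, h2⟩
      obtain ⟨m, hsinf, hsome, _, _⟩ := block_bwd hY hne
      have hHj1 : absgH x (j + 1) = absgH x j + m + 2 := hsinf
      have hQ : absgQ x (j + 1) = m := by
        unfold absgQ; simp only [Nat.add_sub_cancel]; rw [hHj1]; omega
      refine ⟨?_, ?_⟩
      · rw [hHj1, Lsum_succ, ← hH, hQ]; omega
      · rw [hHj1, show absgH x j + m + 2 = sInf {i | absgH x j < i ∧ absgY x i = none}
          from hsinf.symm]
        exact (Nat.sInf_mem hne).2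
  intro j hj1 hjN r hr
  obtain ⟨j', rfl⟩ : ∃ j', j = j' + 1 := ⟨j - 1, by omega⟩
  simp only [Nat.add_sub_cancel]
  obtain ⟨hH, hY⟩ := main j'
  have hne : {i | absgH x j' < i ∧ absgY x i = none}.Nonempty := by
    obtain ⟨i, h1, h2⟩ := hgood (absgH x j'); exact ⟨i, h1, h2⟩
  obtain ⟨m, hsinf, hsome, hmid, hend⟩ := block_bwd hY hne
  have hHj1 : absgH x (j' + 1) = absgH x j' + m + 2 := hsinf
  have hQ : absgQ x (j' + 1) = m := by
    unfold absgQ; simp only [Nat.add_sub_cancel]; rw [hHj1]; omega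
  rw [hQ] at hr ⊢
  rw [← hH]
  set a := absgH x j' with ha
  -- identify x (a+1) with sb (z (j'+1)) m using the output value
  have hZ : absgZ x (j' + 1) = z (j' + 1) := hz _ (by omega) hjN
  have hYH : absgY x (absgH x (j' + 1) - 1) = some (x (a + 1)) := by
    rw [hHj1, show a + m + 2 - 1 = a + m + 1 by omega]; exact hsome
  have hsval : x (a + 1) = sb (z (j' + 1)) m := by
    unfold absgZ at hZ
    rw [hQ, hYH] at hZ
    by_cases hm0 : m = 0
    · rw [if_pos hm0, Option.getD_some] at hZ
      simp [sb, hm0, hZ]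
    · rw [if_neg hm0, Option.getD_some] at hZ
      simp only [sb, if_neg hm0]
      rw [← hZ, Bool.not_not]
  rcases Nat.eq_zero_or_pos r with hr0 | hrpos
  · subst hr0; rw [wAt_zero, ← hsval]
  · rcases Nat.lt_or_ge r (m + 1) with hrm | hrm
    · rw [wAt_mid _ _ hrpos (by omega), ← hsval]
      exact hmid r hrpos (by omega)
    · have : r = m + 1 := by omega
      subst this
      rw [wAt_last, ← hsval, show a + 1 + (m + 1) = a + m + 2 by omega]
      exact hend

/-- index of the block containing position `k`. -/
noncomputable def blkIdx (q : ℕ → ℕ) (k : ℕ) : ℕ := sInf {j | k ≤ Lsum q j}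

/-- the word determined by outputs `z` and gaps `q`. -/
noncomputable def absgW (z : ℕ → Bool) (q : ℕ → ℕ) (k : ℕ) : Bool :=
  wAt (z (blkIdx q k)) (q (blkIdx q k)) (k - Lsum q (blkIdx q k - 1) - 1)

lemma blkIdx_spec (q : ℕ → ℕ) {j r : ℕ} (hj : 1 ≤ j) (hr : r ≤ q j + 1) :
    blkIdx q (Lsum q (j - 1) + 1 + r) = j := by
  set k := Lsum q (j - 1) + 1 + r with hk
  have hkj : k ≤ Lsum q j := by rw [Lsum_pred_add q hj]; omega
  have hlow : ∀ j', j' < j → ¬ (k ≤ Lsum q j') := by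
    intro j' hj' hle
    have := Lsum_mono q (show j' ≤ j - 1 by omega)
    omega
  refine le_antisymm (Nat.sInf_le hkj) ?_
  by_contra hlt
  push_neg at hlt
  have hmem := Nat.sInf_mem (⟨j, hkj⟩ : {j' | k ≤ Lsum q j'}.Nonempty)
  exact hlow _ hlt hmem

lemma absgW_at {z : ℕ → Bool} (q : ℕ → ℕ) {j r : ℕ} (hj : 1 ≤ j) (hr : r ≤ q j + 1) :
    absgW z q (Lsum q (j - 1) + 1 + r) = wAt (z j) (q j) r := by
  unfold absgW
  rw [blkIdx_spec q hj hr]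
  congr 1
  omega

lemma decompose (q : ℕ → ℕ) (N : ℕ) {k : ℕ} (h1 : 1 ≤ k) (h2 : k ≤ Lsum q N) :
    ∃ j r, 1 ≤ j ∧ j ≤ N ∧ r ≤ q j + 1 ∧ k = Lsum q (j - 1) + 1 + r := by
  set j := blkIdx q k with hj
  have hne : {j' | k ≤ Lsum q j'}.Nonempty := ⟨N, h2⟩
  have hkj : k ≤ Lsum q j := Nat.sInf_mem hne
  have hjN : j ≤ N := Nat.sInf_le h2
  have hj1 : 1 ≤ j := by
    rcases Nat.eq_zero_or_pos j with h0 | h; swap; · exact h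
    rw [h0] at hkj; rw [Lsum_zero] at hkj; omega
  have hlow : Lsum q (j - 1) < k := by
    by_contra hle
    push_neg at hle
    have hmem : (j - 1) ∈ {j' | k ≤ Lsum q j'} := hle
    have hjj : blkIdx q k ≤ j - 1 := Nat.sInf_le hmem
    rw [← hj] at hjj
    omega
  have hub : Lsum q j = Lsum q (j - 1) + (q j + 2) := Lsum_pred_add q hj1
  exact ⟨j, k - Lsum q (j - 1) - 1, hj1, hjN, by omega, by omega⟩

lemma blockSpec_iff_word {x z : ℕ → Bool} {q : ℕ → ℕ} {N : ℕ} :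
    BlockSpec x z q N ↔ ∀ k, 1 ≤ k → k ≤ Lsum q N → x k = absgW z q k := by
  constructor
  · intro hx k h1 h2
    obtain ⟨j, r, hj1, hjN, hr, rfl⟩ := decompose q N h1 h2
    rw [absgW_at q hj1 hr]
    exact hx j hj1 hjN r hr
  · intro hw j hj1 hjN r hr
    have h1 : 1 ≤ Lsum q (j - 1) + 1 + r := by omega
    have h2 : Lsum q (j - 1) + 1 + r ≤ Lsum q N := by
      have hub : Lsum q j = Lsum q (j - 1) + (q j + 2) := Lsum_pred_add q hj1
      have := Lsum_mono q hjN
      omega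
    rw [hw _ h1 h2, absgW_at q hj1 hr]

section Measurability

instance : MeasurableSpace (Option Bool) := ⊤

instance : MeasurableSingletonClass (Option Bool) := ⟨fun _ => trivial⟩

variable {α : Type*} [MeasurableSpace α]

lemma measurable_sInf_set {p : α → ℕ → Prop} (hp : ∀ n, MeasurableSet {x | p x n}) :
    Measurable fun x => sInf {n | p x n} := by
  apply measurable_to_countable'
  intro n
  have heq : (fun x => sInf {n | p x n}) ⁻¹' {n} =
      ({x | p x n} ∩ ⋂ m, {x | m < n → ¬ p x m}) ∪ ⋂ m, {x | n = 0 ∧ ¬ p x m} := by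
    ext x
    simp only [Set.mem_preimage, Set.mem_singleton_iff, Set.mem_union, Set.mem_inter_iff,
      Set.mem_iInter, Set.mem_setOf_eq]
    constructor
    · intro h
      by_cases hS : {m | p x m}.Nonempty
      · left
        refine ⟨h ▸ Nat.sInf_mem hS, fun m hm hpm => ?_⟩
        have hle : sInf {n | p x n} ≤ m := Nat.sInf_le hpm
        omega
      · right
        intro m
        have hempty : {m | p x m} = ∅ := Set.not_nonempty_iff_eq_empty.mp hS
        constructor
        · rw [← h, hempty, Nat.sInf_empty]
        · intro hpm; exact hS ⟨m, hpm⟩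
    · rintro (⟨hn, hlt⟩ | hall)
      · refine le_antisymm (Nat.sInf_le hn) ?_
        by_contra hc
        push_neg at hc
        have hmem := Nat.sInf_mem (⟨n, hn⟩ : {m | p x m}.Nonempty)
        exact hlt _ hc hmem
      · have h0 := hall 0
        have hempty : {m | p x m} = ∅ := by
          ext m; simp only [Set.mem_setOf_eq, Set.mem_empty_iff_false, iff_false]
          exact (hall m).2
        rw [hempty, Nat.sInf_empty]; exact h0.1.symm
  rw [heq]
  apply MeasurableSet.union
  · exact (hp n).inter (MeasurableSet.iInter fun m => by
      by_cases hm : m < n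
      · simp only [hm, true_implies]; exact (hp m).compl
      · simp only [hm, false_implies]; exact MeasurableSet.univ.congr (by ext; simp))
  · exact MeasurableSet.iInter fun m => by
      by_cases hn0 : n = 0
      · subst hn0
        have : {x | (0 : ℕ) = 0 ∧ ¬ p x m} = {x | p x m}ᶜ := by ext; simp
        rw [this]; exact (hp m).compl
      · have : {x | n = 0 ∧ ¬ p x m} = ∅ := by ext; simp [hn0]
        rw [this]; exact MeasurableSet.empty

lemma measurable_apply_nat {β : Type*} [MeasurableSpace β] [Countable β]
    [MeasurableSingletonClass β] {f : α → ℕ} {g : α → ℕ → β}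
    (hf : Measurable f) (hg : ∀ n, Measurable fun x => g x n) :
    Measurable fun x => g x (f x) := by
  apply measurable_to_countable'
  intro b
  have heq : (fun x => g x (f x)) ⁻¹' {b} = ⋃ n, f ⁻¹' {n} ∩ (fun x => g x n) ⁻¹' {b} := by
    ext x
    simp only [Set.mem_preimage, Set.mem_singleton_iff, Set.mem_iUnion, Set.mem_inter_iff]
    exact ⟨fun h => ⟨f x, rfl, h⟩, fun ⟨n, hn, h⟩ => hn ▸ h⟩
  rw [heq]
  exact MeasurableSet.iUnion fun n =>
    (hf (measurableSet_singleton n)).inter ((hg n) (measurableSet_singleton b))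

lemma measurable_absgY (i : ℕ) : Measurable fun x : ℕ → Bool => absgY x i := by
  induction i with
  | zero => exact measurable_const
  | succ i ih =>
    have : (fun x : ℕ → Bool => absgY x (i + 1)) =
        (fun p : Option Bool × Bool => absgM p.1 p.2) ∘
          (fun x => (absgY x i, x (i + 1))) := rfl
    rw [this]
    exact (measurable_of_countable _).comp (ih.prodMk (measurable_pi_apply _))

lemma measurable_absgH (j : ℕ) : Measurable fun x : ℕ → Bool => absgH x j := by
  induction j with
  | zero => exact measurable_const
  | succ j ih =>
    have : (fun x : ℕ → Bool => absgH x (j + 1)) =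
        fun x => sInf {i | absgH x j < i ∧ absgY x i = none} := rfl
    rw [this]
    apply measurable_sInf_set
    intro n
    have h1 : MeasurableSet {x : ℕ → Bool | absgH x j < n} := by
      have : {x : ℕ → Bool | absgH x j < n} = (fun x => absgH x j) ⁻¹' (Set.Iio n) := rfl
      rw [this]; exact ih measurableSet_Iio
    have h2 : MeasurableSet {x : ℕ → Bool | absgY x n = none} :=
      (measurable_absgY n) (measurableSet_singleton none)
    exact h1.inter h2

lemma measurable_absgQ (j : ℕ) : Measurable fun x : ℕ → Bool => absgQ x j := by
  have : (fun x : ℕ → Bool => absgQ x j) =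
      (fun p : ℕ × ℕ => p.1 - p.2 - 2) ∘ (fun x => (absgH x j, absgH x (j - 1))) := rfl
  rw [this]
  exact (measurable_of_countable _).comp ((measurable_absgH j).prodMk (measurable_absgH (j - 1)))

lemma measurable_absgZ (j : ℕ) : Measurable fun x : ℕ → Bool => absgZ x j := by
  have hYH : Measurable fun x : ℕ → Bool => absgY x (absgH x j - 1) := by
    apply measurable_apply_nat (f := fun x => absgH x j - 1) (g := fun x n => absgY x n)
    · exact (measurable_of_countable (fun n : ℕ => n - 1)).comp (measurable_absgH j)
    · exact measurable_absgY
  have : (fun x : ℕ → Bool => absgZ x j) =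
      (fun p : ℕ × Option Bool =>
        if p.1 = 0 then p.2.getD false else !(p.2.getD false)) ∘
        (fun x => (absgQ x j, absgY x (absgH x j - 1))) := rfl
  rw [this]
  exact (measurable_of_countable _).comp ((measurable_absgQ j).prodMk hYH)

end Measurability

section Prob

variable {Ω : Type*} [MeasurableSpace Ω] (μ : Measure Ω) [IsProbabilityMeasure μ]
  (X : ℕ → Ω → Bool)

lemma meas_cylinder
    (hindep : iIndepFun X μ)
    (hunif : ∀ i b, μ {ω | X i ω = b} = 1 / 2)
    (K : Finset ℕ) (w : ℕ → Bool) :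
    μ (⋂ k ∈ K, {ω | X k ω = w k}) = (1 / 2 : ℝ≥0∞) ^ K.card := by
  have h := hindep.meas_biInter (S := K) (s := fun k => {ω | X k ω = w k})
    (fun i _ => ⟨{w i}, trivial, rfl⟩)
  rw [h]
  rw [Finset.prod_congr rfl (fun i _ => hunif i (w i)), Finset.prod_const]

lemma good_ae
    (hmeas : ∀ i, Measurable (X i))
    (hindep : iIndepFun X μ)
    (hunif : ∀ i b, μ {ω | X i ω = b} = 1 / 2) :
    μ {ω | ∀ n, ∃ i, n < i ∧ absgY (fun k => X k ω) i = none}ᶜ = 0 := by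
  have hconst : ∀ (n : ℕ) (b : Bool), μ {ω | ∀ k, n < k → X k ω = b} = 0 := by
    intro n b
    have hle : ∀ m : ℕ, μ {ω | ∀ k, n < k → X k ω = b} ≤ (1 / 2 : ℝ≥0∞) ^ m := by
      intro m
      have hsub : {ω | ∀ k, n < k → X k ω = b} ⊆
          ⋂ k ∈ Finset.Icc (n + 1) (n + m), {ω | X k ω = b} := by
        intro ω hω
        simp only [Set.mem_iInter, Finset.mem_Icc]
        intro k hk
        exact hω k (by omega)
      calc μ {ω | ∀ k, n < k → X k ω = b} ≤
          μ (⋂ k ∈ Finset.Icc (n + 1) (n + m), {ω | X k ω = b}) := measure_mono hsub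
        _ = (1 / 2 : ℝ≥0∞) ^ (Finset.Icc (n + 1) (n + m)).card :=
            meas_cylinder μ X hindep hunif _ (fun _ => b)
        _ = (1 / 2 : ℝ≥0∞) ^ m := by rw [Nat.card_Icc]; congr 1; omega
    have htend : Filter.Tendsto (fun m : ℕ => (1 / 2 : ℝ≥0∞) ^ m)
        Filter.atTop (nhds 0) :=
      ENNReal.tendsto_pow_atTop_nhds_zero_of_lt_one (by norm_num)
    have := ge_of_tendsto' htend hle
    exact le_antisymm this zero_le
  have hsub : {ω | ∀ n, ∃ i, n < i ∧ absgY (fun k => X k ω) i = none}ᶜ ⊆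
      ⋃ p : ℕ × Bool, {ω | ∀ k, p.1 < k → X k ω = p.2} := by
    intro ω hω
    simp only [Set.mem_compl_iff, Set.mem_setOf_eq, not_forall] at hω
    obtain ⟨n, hn⟩ := hω
    push_neg at hn
    set x := fun k => X k ω with hx
    have hy1 : absgY x (n + 1) ≠ none := hn (n + 1) (by omega)
    obtain ⟨s, hs⟩ : ∃ s, absgY x (n + 1) = some s := by
      cases hc : absgY x (n + 1)
      · exact absurd hc hy1
      · exact ⟨_, rfl⟩
    have claim : ∀ d, absgY x (n + 1 + d) = some s ∧ (1 ≤ d → x (n + 1 + d) = !s) := by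
      intro d
      induction d with
      | zero => exact ⟨hs, by omega⟩
      | succ d ih =>
        have h1 := ih.1
        have hstep : absgY x (n + 1 + (d + 1)) = absgM (some s) (x (n + 1 + (d + 1))) := by
          rw [show n + 1 + (d + 1) = (n + 1 + d) + 1 by omega, absgY_succ, h1,
            show n + 1 + d + 1 = n + 1 + (d + 1) by omega]
        have hne' : absgY x (n + 1 + (d + 1)) ≠ none := hn _ (by omega)
        have hxne : x (n + 1 + (d + 1)) ≠ s := by
          intro hxx; rw [hstep, hxx, absgM_some_eq] at hne'; exact hne' rfl
        have hxval : x (n + 1 + (d + 1)) = !s := bool_ne_iff.mp hxne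
        exact ⟨by rw [hstep, hxval, absgM_some_ne (by simp)], fun _ => hxval⟩
    refine Set.mem_iUnion.mpr ⟨(n + 1, !s), ?_⟩
    intro k hk
    have := (claim (k - (n + 1))).2 (by omega)
    rwa [show n + 1 + (k - (n + 1)) = k by omega] at this
  refine le_antisymm (le_trans (measure_mono hsub) ?_) zero_le
  rw [show (0 : ℝ≥0∞) = ∑' _ : ℕ × Bool, 0 by simp]
  exact le_trans (measure_iUnion_le _) (by simp [hconst])

end Prob

/-- tsum of a product over a finite pi type factors. -/
lemma tsum_pi_prod : ∀ (N : ℕ) (g : Fin N → ℕ → ℝ≥0∞),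
    ∑' v : Fin N → ℕ, ∏ i, g i (v i) = ∏ i, ∑' n, g i n := by
  intro N
  induction N with
  | zero =>
    intro g
    simp only [Finset.univ_eq_empty, Finset.prod_empty]
    exact tsum_eq_single (fun i => i.elim0) (fun v hv => absurd (funext fun i => i.elim0) hv)
  | succ n ih =>
    intro g
    rw [← (Fin.consEquiv fun _ => ℕ).tsum_eq, ENNReal.tsum_prod']
    have h1 : ∀ (a : ℕ) (f : Fin n → ℕ),
        ∏ i, g i ((Fin.consEquiv fun _ => ℕ) (a, f) i) =
          g 0 a * ∏ i : Fin n, g i.succ (f i) := by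
      intro a f
      rw [Fin.prod_univ_succ]
      simp [Fin.consEquiv, Fin.cons_succ]
    simp_rw [h1]
    rw [Fin.prod_univ_succ]
    have h2 : ∀ a : ℕ, ∑' f : Fin n → ℕ, g 0 a * ∏ i : Fin n, g i.succ (f i) =
        g 0 a * ∑' f : Fin n → ℕ, ∏ i : Fin n, g i.succ (f i) := fun a =>
      ENNReal.tsum_mul_left
    simp_rw [h2, ih (fun i => g i.succ)]
    exact ENNReal.tsum_mul_right

lemma prod_Icc_fin {M : Type*} [CommMonoid M] (N : ℕ) (f : ℕ → M) :
    ∏ j ∈ Finset.Icc 1 N, f j = ∏ i : Fin N, f ((i : ℕ) + 1) := by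
  refine Finset.prod_bij' (fun j hj => (⟨j - 1, by
      simp only [Finset.mem_Icc] at hj; omega⟩ : Fin N))
    (fun i _ => (i : ℕ) + 1) ?_ ?_ ?_ ?_ ?_
  · intro j hj; exact Finset.mem_univ _
  · intro i _; simp only [Finset.mem_Icc]; omega
  · intro j hj; simp only [Finset.mem_Icc] at hj; simp only [Fin.val_mk]; omega
  · intro i _; simp
  · intro j hj; simp only [Finset.mem_Icc] at hj; congr 1; simp only [Fin.val_mk]; omega

lemma tsum_geo_two : ∑' n : ℕ, (1 / 2 : ℝ≥0∞) ^ n = 2 := by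
  rw [ENNReal.tsum_geometric]
  rw [one_div, ENNReal.one_sub_inv_two, inv_inv]

lemma tsum_geo_shift : ∑' n : ℕ, (1 / 2 : ℝ≥0∞) ^ (n + 2) = 1 / 2 := by
  calc ∑' n : ℕ, (1 / 2 : ℝ≥0∞) ^ (n + 2)
      = ∑' n : ℕ, (1 / 2 : ℝ≥0∞) ^ n * (1 / 2) ^ 2 := by
        apply tsum_congr; intro n; rw [pow_add]
    _ = 2 * (1 / 2) ^ 2 := by rw [ENNReal.tsum_mul_right, tsum_geo_two, mul_comm]
    _ = 1 / 2 := by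
        rw [one_div, pow_two, ← mul_assoc,
          ENNReal.mul_inv_cancel (by norm_num) (by norm_num), one_mul]

end ABSG

open ABSG


set_option maxHeartbeats 2000000 in
/-- **Lemma 1 of the paper.** If `(X n)_{n≥1}` are i.i.d. uniform bits
driving the ABSG algorithm, then for every `N ≥ 1` and every output string
`z 1, …, z N` of positive probability, conditionally on `Z_1^N = z_1^N` the gap variables
`Q 1, …, Q N` are i.i.d. geometric(1/2):
`P(Q_1 = q_1, …, Q_N = q_N | Z_1^N = z_1^N) = ∏_{i=1}^N (1/2)^{q_i+1}` and
`P(Q_i = q | Z_1^N = z_1^N) = (1/2)^{q+1}` for each `1 ≤ i ≤ N`. -/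
theorem stmt_0
    {Ω : Type*} [MeasurableSpace Ω] (μ : Measure Ω) [IsProbabilityMeasure μ]
    (X : ℕ → Ω → Bool)
    (hmeas : ∀ i, Measurable (X i))
    (hindep : iIndepFun X μ)
    (hunif : ∀ i b, μ {ω | X i ω = b} = 1 / 2) :
    ∀ N : ℕ, 1 ≤ N → ∀ z : ℕ → Bool,
      0 < μ {ω | ∀ j, 1 ≤ j → j ≤ N → absgZ (fun k => X k ω) j = z j} →
      (∀ q : ℕ → ℕ,
        (μ[|{ω | ∀ j, 1 ≤ j → j ≤ N → absgZ (fun k => X k ω) j = z j}])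
            {ω | ∀ i, 1 ≤ i → i ≤ N → absgQ (fun k => X k ω) i = q i}
          = ∏ i ∈ Finset.Icc 1 N, (1 / 2 : ℝ≥0∞) ^ (q i + 1)) ∧
      (∀ i, 1 ≤ i → i ≤ N → ∀ qv : ℕ,
        (μ[|{ω | ∀ j, 1 ≤ j → j ≤ N → absgZ (fun k => X k ω) j = z j}])
            {ω | absgQ (fun k => X k ω) i = qv}
          = (1 / 2 : ℝ≥0∞) ^ (qv + 1)) := by
  intro N hN z _hpos
  set T : Set Ω := {ω | ∀ j, 1 ≤ j → j ≤ N → absgZ (fun k => X k ω) j = z j} with hTdef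
  set G : Set Ω := {ω | ∀ n, ∃ i, n < i ∧ absgY (fun k => X k ω) i = none} with hGdef
  have hφ : Measurable fun ω : Ω => (fun k => X k ω) :=
    measurable_pi_lambda _ hmeas
  -- T is measurable
  have hTmeas : MeasurableSet T := by
    have hT2 : T = ⋂ j : ℕ, {ω | 1 ≤ j → j ≤ N → absgZ (fun k => X k ω) j = z j} := by
      ext ω; simp only [hTdef, Set.mem_setOf_eq, Set.mem_iInter]
    rw [hT2]
    refine MeasurableSet.iInter fun j => ?_
    by_cases hj : 1 ≤ j ∧ j ≤ N
    · have he : {ω | 1 ≤ j → j ≤ N → absgZ (fun k => X k ω) j = z j} =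
          (fun ω => absgZ (fun k => X k ω) j) ⁻¹' {z j} := by
        ext ω; simp [hj.1, hj.2]
      rw [he]
      exact ((measurable_absgZ j).comp hφ) (measurableSet_singleton _)
    · have he : {ω | 1 ≤ j → j ≤ N → absgZ (fun k => X k ω) j = z j} = Set.univ := by
        ext ω; simp only [Set.mem_setOf_eq, Set.mem_univ, iff_true]
        intro h1 h2; exact absurd ⟨h1, h2⟩ hj
      rw [he]; exact MeasurableSet.univ
  have hG0 : μ Gᶜ = 0 := good_ae μ X hmeas hindep hunif
  -- the cylinder events
  set A : (ℕ → ℕ) → Set Ω := fun q =>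
    ⋂ k ∈ Finset.Icc 1 (Lsum q N), {ω | X k ω = absgW z q k} with hAdef
  have hAmeas : ∀ q, MeasurableSet (A q) := fun q =>
    Finset.measurableSet_biInter _ fun k _ => (hmeas k) (measurableSet_singleton _)
  have hAμ : ∀ q, μ (A q) = (1 / 2 : ℝ≥0∞) ^ (Lsum q N) := by
    intro q
    rw [hAdef]
    rw [meas_cylinder μ X hindep hunif]
    congr 1
    rw [Nat.card_Icc]
    omega
  have hAmem : ∀ q (ω : Ω), ω ∈ A q ↔ BlockSpec (fun k => X k ω) z q N := by
    intro q ω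
    rw [blockSpec_iff_word, hAdef]
    simp only [Set.mem_iInter, Finset.mem_Icc, Set.mem_setOf_eq]
    exact ⟨fun h k h1 h2 => h k ⟨h1, h2⟩, fun h k hk => h k hk.1 hk.2⟩
  -- sandwich principle modulo the null set Gᶜ
  have sandwich : ∀ {S U : Set Ω}, S ∩ G ⊆ U → U ⊆ S → μ S = μ U := by
    intro S U h1 h2
    refine le_antisymm ?_ (measure_mono h2)
    calc μ S ≤ μ (U ∪ Gᶜ) := measure_mono (fun ω hω => by
          by_cases hg : ω ∈ G
          · exact Or.inl (h1 ⟨hω, hg⟩)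
          · exact Or.inr hg)
      _ ≤ μ U + μ Gᶜ := measure_union_le _ _
      _ = μ U := by rw [hG0, add_zero]
  -- forward inclusion
  have hA_subT : ∀ q : ℕ → ℕ, A q ⊆ T := by
    intro q ω hω
    obtain ⟨-, h2⟩ := fwd ((hAmem q ω).mp hω)
    exact fun j hj1 hjN => (h2 j hj1 hjN).2
  have hA_subQ : ∀ (q : ℕ → ℕ) (ω : Ω), ω ∈ A q →
      ∀ i, 1 ≤ i → i ≤ N → absgQ (fun k => X k ω) i = q i := by
    intro q ω hω i h1 h2
    obtain ⟨-, hh⟩ := fwd ((hAmem q ω).mp hω)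
    exact (hh i h1 h2).1
  -- extension of a Fin-indexed gap vector
  set ext : (Fin N → ℕ) → ℕ → ℕ := fun v j =>
    if h : 1 ≤ j ∧ j ≤ N then v ⟨j - 1, by omega⟩ else 0 with hextdef
  have hext_at : ∀ (v : Fin N → ℕ) (i : Fin N), ext v ((i : ℕ) + 1) = v i := by
    intro v i
    have h : 1 ≤ (i : ℕ) + 1 ∧ (i : ℕ) + 1 ≤ N := ⟨by omega, i.isLt⟩
    simp only [hextdef, dif_pos h, Nat.add_sub_cancel, Fin.eta]
  have hext_at' : ∀ (v : Fin N → ℕ) (j : ℕ) (h1 : 1 ≤ j) (h2 : j ≤ N),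
      ext v j = v ⟨j - 1, by omega⟩ := by
    intro v j h1 h2
    simp only [hextdef, dif_pos (⟨h1, h2⟩ : 1 ≤ j ∧ j ≤ N)]
  -- backward inclusion into a union of cylinders
  have hTG_sub : ∀ ω : Ω, ω ∈ T → ω ∈ G →
      ω ∈ A (ext (fun i => absgQ (fun k => X k ω) ((i : ℕ) + 1))) := by
    intro ω hT hGm
    have hbs := bwd hGm hT
    set v : Fin N → ℕ := fun i => absgQ (fun k => X k ω) ((i : ℕ) + 1) with hv
    refine (hAmem _ ω).mpr ?_
    refine blockSpec_congr (q := absgQ (fun k => X k ω)) ?_ hbs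
    intro i h1 h2
    rw [hext_at' v i h1 h2]
    simp only [hv]
    congr 1
    omega
  -- disjointness of the cylinders
  have hdisj : Pairwise (Function.onFun Disjoint fun v : Fin N → ℕ => A (ext v)) := by
    intro v v' hvv'
    rw [Function.onFun, Set.disjoint_left]
    intro ω h1 h2
    apply hvv'
    funext i
    have e1 := hA_subQ (ext v) ω h1 ((i : ℕ) + 1) (by omega) i.isLt
    have e2 := hA_subQ (ext v') ω h2 ((i : ℕ) + 1) (by omega) i.isLt
    rw [hext_at] at e1 e2
    rw [← e1, ← e2]
  -- the measure of a cylinder as a product over Fin N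
  have hAμ' : ∀ v : Fin N → ℕ,
      μ (A (ext v)) = ∏ i : Fin N, (1 / 2 : ℝ≥0∞) ^ (v i + 2) := by
    intro v
    rw [hAμ,
      show Lsum (ext v) N = ∑ i ∈ Finset.Icc 1 N, (ext v i + 2) from rfl,
      ← Finset.prod_pow_eq_pow_sum, prod_Icc_fin]
    apply Finset.prod_congr rfl
    intro i _
    rw [hext_at]
  -- μ T = (1/2)^N
  have hμT : μ T = (1 / 2 : ℝ≥0∞) ^ N := by
    have hU : μ T = μ (⋃ v : Fin N → ℕ, A (ext v)) := by
      apply sandwich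
      · rintro ω ⟨h1, h2⟩
        exact Set.mem_iUnion.mpr
          ⟨fun i => absgQ (fun k => X k ω) ((i : ℕ) + 1), hTG_sub ω h1 h2⟩
      · exact Set.iUnion_subset fun v => hA_subT _
    rw [hU, measure_iUnion hdisj (fun v => hAmeas _)]
    calc ∑' v : Fin N → ℕ, μ (A (ext v))
        = ∑' v : Fin N → ℕ, ∏ i : Fin N, (1 / 2 : ℝ≥0∞) ^ (v i + 2) := by
          exact tsum_congr hAμ'
      _ = ∏ i : Fin N, ∑' n : ℕ, (1 / 2 : ℝ≥0∞) ^ (n + 2) :=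
          tsum_pi_prod N (fun _ n => (1 / 2 : ℝ≥0∞) ^ (n + 2))
      _ = ∏ _i : Fin N, (1 / 2 : ℝ≥0∞) := by
          exact Finset.prod_congr rfl fun i _ => tsum_geo_shift
      _ = (1 / 2 : ℝ≥0∞) ^ N := by rw [Finset.prod_const, Finset.card_univ, Fintype.card_fin]
  have hhalf_ne0 : (1 / 2 : ℝ≥0∞) ≠ 0 := by norm_num
  have hhalf_netop : (1 / 2 : ℝ≥0∞) ≠ ⊤ := by norm_num
  have hpowN_ne0 : ((1 / 2 : ℝ≥0∞) ^ N) ≠ 0 := pow_ne_zero _ hhalf_ne0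
  have hpowN_netop : ((1 / 2 : ℝ≥0∞) ^ N) ≠ ⊤ := ENNReal.pow_ne_top hhalf_netop
  constructor
  · -- joint distribution
    intro q
    set S : Set Ω := {ω | ∀ i, 1 ≤ i → i ≤ N → absgQ (fun k => X k ω) i = q i} with hSdef
    have hTS : μ (T ∩ S) = (1 / 2 : ℝ≥0∞) ^ (Lsum q N) := by
      rw [sandwich (U := A q) ?_ ?_, hAμ]
      · rintro ω ⟨⟨h1, h2⟩, h3⟩
        refine (hAmem q ω).mpr ?_
        refine blockSpec_congr (q := absgQ (fun k => X k ω)) ?_ (bwd h3 h1)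
        exact fun i hi1 hi2 => h2 i hi1 hi2
      · intro ω hω
        exact ⟨hA_subT q hω, fun i h1 h2 => hA_subQ q ω hω i h1 h2⟩
    rw [cond_apply hTmeas μ S, hTS, hμT]
    have hsplit : (1 / 2 : ℝ≥0∞) ^ (Lsum q N) =
        (1 / 2 : ℝ≥0∞) ^ N * ∏ i ∈ Finset.Icc 1 N, (1 / 2 : ℝ≥0∞) ^ (q i + 1) := by
      rw [Finset.prod_pow_eq_pow_sum, ← pow_add]
      congr 1
      rw [Lsum]
      rw [Finset.sum_congr rfl (fun i _ => show q i + 2 = (q i + 1) + 1 by omega)]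
      rw [Finset.sum_add_distrib, Finset.sum_const, Nat.card_Icc]
      simp only [smul_eq_mul, mul_one]
      omega
    rw [hsplit, ← mul_assoc, ENNReal.inv_mul_cancel hpowN_ne0 hpowN_netop, one_mul]
  · -- marginal distribution
    intro i0 hi01 hi0N qv
    set R : Set Ω := {ω | absgQ (fun k => X k ω) i0 = qv} with hRdef
    set i0f : Fin N := ⟨i0 - 1, by omega⟩ with hi0f
    set B : (Fin N → ℕ) → Set Ω := fun v =>
      if v i0f = qv then A (ext v) else ∅ with hBdef
    have hBeq : ∀ v, A (ext v) ∩ R = B v := by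
      intro v
      by_cases hv : v i0f = qv
      · rw [hBdef]; simp only [if_pos hv]
        refine Set.inter_eq_left.mpr ?_
        intro ω hω
        have := hA_subQ (ext v) ω hω i0 hi01 hi0N
        rw [hext_at' v i0 hi01 hi0N] at this
        rw [hRdef]
        simp only [Set.mem_setOf_eq, this, ← hi0f, hv]
      · rw [hBdef]; simp only [if_neg hv]
        rw [Set.eq_empty_iff_forall_notMem]
        rintro ω ⟨h1, h2⟩
        have := hA_subQ (ext v) ω h1 i0 hi01 hi0N
        rw [hext_at' v i0 hi01 hi0N] at this
        rw [hRdef] at h2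
        simp only [Set.mem_setOf_eq] at h2
        rw [h2] at this
        exact hv (by rw [← hi0f] at this; omega)
    have hBmeas : ∀ v, MeasurableSet (B v) := by
      intro v; rw [hBdef]
      by_cases hv : v i0f = qv
      · simp only [if_pos hv]; exact hAmeas _
      · simp only [if_neg hv]; exact MeasurableSet.empty
    have hBdisj : Pairwise (Function.onFun Disjoint B) := by
      intro v v' hvv'
      have := hdisj hvv'
      rw [Function.onFun] at this ⊢
      rw [hBdef]
      by_cases hv : v i0f = qv <;> by_cases hv' : v' i0f = qv <;>
        simp only [if_pos, if_neg, hv, hv', if_true, if_false] <;>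
        first
          | exact this
          | exact Disjoint.mono_left (by simp) (by simp [Set.disjoint_left])
          | simp [Set.disjoint_left]
    have hTR : μ (T ∩ R) = (1 / 2 : ℝ≥0∞) ^ (qv + 2) * (1 / 2 : ℝ≥0∞) ^ (N - 1) := by
      have hU : μ (T ∩ R) = μ (⋃ v : Fin N → ℕ, B v) := by
        apply sandwich
        · rintro ω ⟨⟨h1, h2⟩, h3⟩
          have hmem := hTG_sub ω h1 h3
          set v : Fin N → ℕ := fun i => absgQ (fun k => X k ω) ((i : ℕ) + 1) with hv
          refine Set.mem_iUnion.mpr ⟨v, ?_⟩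
          rw [← hBeq v]
          exact ⟨hmem, h2⟩
        · refine Set.iUnion_subset fun v => ?_
          rw [← hBeq v]
          exact fun ω hω => ⟨hA_subT _ hω.1, hω.2⟩
      rw [hU, measure_iUnion hBdisj hBmeas]
      have hμB : ∀ v : Fin N → ℕ, μ (B v) =
          ∏ i : Fin N, (if i = i0f ∧ v i ≠ qv then 0 else (1 / 2 : ℝ≥0∞) ^ (v i + 2)) := by
        intro v
        by_cases hv : v i0f = qv
        · rw [hBdef]; simp only [if_pos hv]
          rw [hAμ' v]
          apply Finset.prod_congr rfl
          intro i _
          by_cases hii : i = i0f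
          · subst hii; simp [hv]
          · simp [hii]
        · rw [hBdef]; simp only [if_neg hv, measure_empty]
          symm
          apply Finset.prod_eq_zero (Finset.mem_univ i0f)
          simp [hv]
      rw [tsum_congr hμB, tsum_pi_prod N
        (fun i n => if i = i0f ∧ n ≠ qv then 0 else (1 / 2 : ℝ≥0∞) ^ (n + 2))]
      have hfac : ∀ i : Fin N,
          (∑' n : ℕ, if i = i0f ∧ n ≠ qv then 0 else (1 / 2 : ℝ≥0∞) ^ (n + 2)) =
            if i = i0f then (1 / 2 : ℝ≥0∞) ^ (qv + 2) else (1 / 2 : ℝ≥0∞) := by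
        intro i
        by_cases hii : i = i0f
        · subst hii
          simp only [if_pos rfl, true_and]
          rw [tsum_eq_single qv ?_]
          · simp
          · intro n hn; simp [hn]
        · simp only [if_neg hii, hii, false_and, if_false]
          exact tsum_geo_shift
      rw [Finset.prod_congr rfl (fun i _ => hfac i)]
      rw [← Finset.mul_prod_erase Finset.univ _ (Finset.mem_univ i0f)]
      rw [if_pos rfl]
      congr 1
      rw [Finset.prod_congr rfl (fun i hi => by
        rw [if_neg (Finset.ne_of_mem_erase hi)])]
      rw [Finset.prod_const, Finset.card_erase_of_mem (Finset.mem_univ _),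
        Finset.card_univ, Fintype.card_fin]
    rw [cond_apply hTmeas μ R, hTR, hμT]
    have hcollapse : (1 / 2 : ℝ≥0∞) ^ (qv + 2) * (1 / 2 : ℝ≥0∞) ^ (N - 1) =
        (1 / 2 : ℝ≥0∞) ^ N * (1 / 2 : ℝ≥0∞) ^ (qv + 1) := by
      rw [← pow_add, ← pow_add]
      congr 1
      omega
    rw [hcollapse, ← mul_assoc, ENNReal.inv_mul_cancel hpowN_ne0 hpowN_netop, one_mul]
end

section
/- (Converse, general case.) Let L be a positive integer and let (Q_i)_{i≥1} be independent identically distributed random variables taking values in ℕ with P(Q_i = q) = (1/2)^{q+1}. Let G_1, …, G_K be guesses, where G_k = (i_k, θ_k, q^{(k)}) with i_k ≥ 1, θ_k ≥ 1, q^{(k)} ∈ ℕ^{θ_k} and 2θ_k + Σ_{j=1}^{θ_k} q^{(k)}_j ≥ L for every k. If the success probability P( ∃ k ∈ {1,…,K} : Q_{i_k + j − 1} = q^{(k)}_j for all 1 ≤ j ≤ θ_k ) > 1/2, then K > 2^{L/2 − 1}. -/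
open MeasureTheory ProbabilityTheory ENNReal

lemma guess_prob {Ω : Type*} [MeasurableSpace Ω] (μ : Measure Ω)
    (Q : ℕ → Ω → ℕ)
    (hindep : iIndepFun Q μ)
    (hpmf : ∀ i q, μ {ω | Q i ω = q} = (1 / 2 : ℝ≥0∞) ^ (q + 1))
    (a θ : ℕ) (q : ℕ → ℕ) :
    μ {ω | ∀ j < θ, Q (a + j) ω = q j}
      = (1/2 : ℝ≥0∞) ^ (θ + ∑ j ∈ Finset.range θ, q j) := by
  classical
  set S : Finset ℕ := (Finset.range θ).image (fun j => a + j) with hS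
  set s : ℕ → Set Ω := fun i => Q i ⁻¹' {q (i - a)} with hs
  have hset : {ω | ∀ j < θ, Q (a + j) ω = q j} = ⋂ i ∈ S, s i := by
    ext ω
    simp only [Set.mem_setOf_eq, Set.mem_iInter, hS, Finset.mem_image, Finset.mem_range, hs,
      Set.mem_preimage, Set.mem_singleton_iff]
    constructor
    · rintro h i ⟨j, hj, rfl⟩
      simpa using h j hj
    · intro h j hj
      simpa using h (a + j) ⟨j, hj, rfl⟩
  rw [hset, hindep.meas_biInter (fun i _ => ⟨{q (i - a)}, measurableSet_singleton _, rfl⟩),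
    Finset.prod_image (by intro x _ y _ h; simp only at h; omega)]
  have heach : ∀ j ∈ Finset.range θ, μ (s (a + j)) = (1/2:ℝ≥0∞) ^ (q j + 1) := by
    intro j _
    have h1 : s (a + j) = {ω | Q (a + j) ω = q j} := by
      ext ω; simp [hs, Nat.add_sub_cancel_left]
    rw [h1, hpmf]
  rw [Finset.prod_congr rfl heach, Finset.prod_pow_eq_pow_sum, Finset.sum_add_distrib,
    Finset.sum_const, Finset.card_range, smul_eq_mul, mul_one, add_comm]

/-- **Converse, general case.** If `K` valid ABSG guesses
`G_k = (i_k, θ_k, q^{(k)})` (with `i_k ≥ 1`, `θ_k ≥ 1`, `2θ_k + Σ_j q^{(k)}_j ≥ L`)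
against i.i.d. geometric(1/2) variables `(Q i)` have overall success probability
exceeding 1/2, then `K > 2^{L/2 − 1}`. -/
theorem stmt_5
    {Ω : Type*} [MeasurableSpace Ω] (μ : Measure Ω) [IsProbabilityMeasure μ]
    (Q : ℕ → Ω → ℕ)
    (hmeas : ∀ i, Measurable (Q i))
    (hindep : iIndepFun Q μ)
    (hpmf : ∀ i q, μ {ω | Q i ω = q} = (1 / 2 : ℝ≥0∞) ^ (q + 1))
    (L : ℕ) (hL : 1 ≤ L)
    (K : ℕ) (idx θ : ℕ → ℕ) (q : ℕ → ℕ → ℕ)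
    (hidx : ∀ k < K, 1 ≤ idx k) (hθ : ∀ k < K, 1 ≤ θ k)
    (hvalid : ∀ k < K, L ≤ 2 * θ k + ∑ j ∈ Finset.range (θ k), q k j)
    (hsucc : (1 / 2 : ℝ≥0∞)
        < μ {ω | ∃ k < K, ∀ j < θ k, Q (idx k + j) ω = q k j}) :
    (2 : ℝ) ^ ((L : ℝ) / 2 - 1) < (K : ℝ) := by
  classical
  set c := (L + 1) / 2 with hc
  have hunion : {ω | ∃ k < K, ∀ j < θ k, Q (idx k + j) ω = q k j}
      = ⋃ k ∈ Finset.range K, {ω | ∀ j < θ k, Q (idx k + j) ω = q k j} := by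
    ext ω; simp
  have hbound : μ {ω | ∃ k < K, ∀ j < θ k, Q (idx k + j) ω = q k j}
      ≤ ∑ k ∈ Finset.range K, μ {ω | ∀ j < θ k, Q (idx k + j) ω = q k j} := by
    rw [hunion]; exact measure_biUnion_finset_le _ _
  have hone : ∀ k ∈ Finset.range K,
      μ {ω | ∀ j < θ k, Q (idx k + j) ω = q k j} ≤ (1/2 : ℝ≥0∞) ^ c := by
    intro k hk
    rw [Finset.mem_range] at hk
    rw [guess_prob μ Q hindep hpmf]
    have h1 := hvalid k hk
    have h2 : c ≤ θ k + ∑ j ∈ Finset.range (θ k), q k j := by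
      set n := ∑ j ∈ Finset.range (θ k), q k j
      omega
    exact pow_le_pow_of_le_one (by norm_num) (by norm_num) h2
  have hsum : (1/2 : ℝ≥0∞) < K * (1/2 : ℝ≥0∞) ^ c := by
    calc (1/2 : ℝ≥0∞) < _ := hsucc
    _ ≤ _ := hbound
    _ ≤ ∑ _k ∈ Finset.range K, (1/2 : ℝ≥0∞) ^ c := Finset.sum_le_sum hone
    _ = K * (1/2 : ℝ≥0∞) ^ c := by simp [mul_comm]
  have hfin : ((K : ℝ≥0∞) * (1/2 : ℝ≥0∞) ^ c) ≠ ⊤ := by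
    apply ENNReal.mul_ne_top (by simp)
    exact ENNReal.pow_ne_top (by norm_num)
  have hreal : (1/2 : ℝ) < K * (1/2 : ℝ) ^ c := by
    have := (ENNReal.toReal_lt_toReal (by norm_num) hfin).mpr hsum
    simpa [ENNReal.toReal_mul, ENNReal.toReal_pow] using this
  have h2c : (L : ℝ) / 2 ≤ (c : ℝ) := by
    have : L ≤ 2 * c := by omega
    have : (L : ℝ) ≤ 2 * c := by exact_mod_cast this
    linarith
  have hstep : (2 : ℝ) ^ ((L : ℝ) / 2 - 1) ≤ (2 : ℝ) ^ ((c : ℝ) - 1) :=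
    Real.rpow_le_rpow_of_exponent_le (by norm_num) (by linarith)
  have hlast : (2 : ℝ) ^ ((c : ℝ) - 1) < (K : ℝ) := by
    have h2pow : (2 : ℝ) ^ ((c : ℝ) - 1) = 2 ^ c / 2 := by
      rw [Real.rpow_sub (by norm_num), Real.rpow_natCast, Real.rpow_one]
    rw [h2pow]
    have hp : (0 : ℝ) < 2 ^ c := by positivity
    have h' : (1/2 : ℝ)^c = (2^c)⁻¹ := by rw [one_div, inv_pow]
    rw [h'] at hreal
    have hcancel : (2 : ℝ)^c * (2^c)⁻¹ = 1 := mul_inv_cancel₀ (ne_of_gt hp)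
    rw [div_lt_iff₀ (by norm_num : (0:ℝ) < 2)]
    nlinarith [hreal, hp, hcancel]
  linarith
end

section
/- (Achievability, exhaustive search.) Let (Q_i)_{i≥1} be independent identically distributed random variables taking values in ℕ with P(Q_i = q) = (1/2)^{q+1}. For every ε ∈ (0,1) there exists n₀ such that for all n ≥ n₀ there exists a finite set S ⊆ ℕ^n satisfying: (i) |S| ≤ 2^{n(2+ε)}; (ii) P( (Q_1,…,Q_n) ∈ S ) > 1 − ε; and (iii) every q ∈ S satisfies n(1−ε) ≤ Σ_{i=1}^n q_i ≤ n(1+ε), so that with L = 3n every guess (1, n, q), q ∈ S, satisfies 2n + Σ_{i=1}^n q_i ≥ L(1 − ε/3). -/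
open MeasureTheory ProbabilityTheory ENNReal

namespace Stmt8Aux

/-- Extend an `n`-tuple of naturals by zero. -/
def ext (n : ℕ) (q : Fin n → ℕ) (j : ℕ) : ℕ := if h : j < n then q ⟨j, h⟩ else 0

/-- Stars-and-bars position map. -/
def pos (n : ℕ) (q : Fin n → ℕ) (i : ℕ) : ℕ := (∑ j ∈ Finset.range (i + 1), ext n q j) + i

lemma pos_strictMono (n : ℕ) (q : Fin n → ℕ) : StrictMono (pos n q) := by
  apply strictMono_nat_of_lt_succ
  intro i
  simp only [pos, Finset.sum_range_succ]
  omega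

lemma sum_ext (n : ℕ) (q : Fin n → ℕ) :
    ∑ j ∈ Finset.range n, ext n q j = ∑ i, q i := by
  rw [← Fin.sum_univ_eq_sum_range (fun j => ext n q j) n]
  exact Finset.sum_congr rfl fun i _ => by simp [ext]

lemma pos_lt (n m : ℕ) (q : Fin n → ℕ) (hq : ∑ i, q i ≤ m) (i : Fin n) :
    pos n q i < m + n := by
  have h1 : ∑ j ∈ Finset.range ((i : ℕ) + 1), ext n q j ≤ ∑ j ∈ Finset.range n, ext n q j :=
    Finset.sum_le_sum_of_subset (Finset.range_subset_range.2 i.isLt)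
  rw [sum_ext] at h1
  have h2 := i.isLt
  unfold pos
  omega

lemma card_le_two_pow {n m : ℕ} {T : Finset (Fin n → ℕ)} (hT : ∀ q ∈ T, ∑ i, q i ≤ m) :
    T.card ≤ 2 ^ (m + n) := by
  classical
  have hmono : ∀ q : Fin n → ℕ, StrictMono (fun i : Fin n => pos n q i) :=
    fun q => (pos_strictMono n q).comp Fin.val_strictMono
  have inj : Set.InjOn (fun q => Finset.image (fun i : Fin n => pos n q i) Finset.univ) ↑T := by
    intro q1 _ q2 _ h
    simp only at h
    have hc1 : (Finset.image (fun i : Fin n => pos n q1 i) Finset.univ).card = n := by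
      rw [Finset.card_image_of_injective _ (hmono q1).injective, Finset.card_univ,
        Fintype.card_fin]
    have hw1 := Finset.orderEmbOfFin_unique hc1
      (f := fun i : Fin n => pos n q1 i)
      (fun x => Finset.mem_image_of_mem _ (Finset.mem_univ x)) (hmono q1)
    have hw2 := Finset.orderEmbOfFin_unique hc1
      (f := fun i : Fin n => pos n q2 i)
      (fun x => h ▸ Finset.mem_image_of_mem _ (Finset.mem_univ x)) (hmono q2)
    have hpos : ∀ j, ∀ hj : j < n, pos n q1 j = pos n q2 j := fun j hj =>
      (congrFun hw1 ⟨j, hj⟩).trans (congrFun hw2 ⟨j, hj⟩).symm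
    have hext : ∀ j, j < n → ext n q1 j = ext n q2 j := by
      intro j
      induction j with
      | zero =>
        intro hj
        have h0 := hpos 0 hj
        simp only [pos, Finset.sum_range_succ, Finset.sum_range_zero] at h0
        omega
      | succ j ih =>
        intro hj
        have hjlt : j < n := Nat.lt_of_succ_lt hj
        have e1 := hpos (j + 1) hj
        have e0 := hpos j hjlt
        have hih := ih hjlt
        simp only [pos, Finset.sum_range_succ] at e1 e0
        omega
    funext i
    have hi := hext i i.isLt
    simpa [ext] using hi
  calc T.card ≤ (Finset.range (m + n)).powerset.card := by
        apply Finset.card_le_card_of_injOn _ _ inj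
        intro q hq
        simp only [Finset.mem_coe, Finset.mem_powerset]
        intro x hx
        simp only [Finset.mem_image] at hx
        obtain ⟨i, -, rfl⟩ := hx
        exact Finset.mem_range.2 (pos_lt n m q (hT q hq) i)
    _ = 2 ^ (m + n) := by simp

end Stmt8Aux

/-- **Achievability, exhaustive search.** For i.i.d. geometric(1/2)
variables `(Q i)` and every `ε ∈ (0,1)`, for all sufficiently large `n` there is a finite
set `S ⊆ ℕ^n` of guesses with (i) `|S| ≤ 2^{n(2+ε)}`, (ii)
`P((Q_1,…,Q_n) ∈ S) > 1 − ε`, and (iii) every `q ∈ S` has `n(1−ε) ≤ Σ q_i ≤ n(1+ε)`,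
so that with `L = 3n` each guess `(1, n, q)` satisfies `2n + Σ q_i ≥ L(1 − ε/3)`. -/
theorem stmt_8
    {Ω : Type*} [MeasurableSpace Ω] (μ : Measure Ω) [IsProbabilityMeasure μ]
    (Q : ℕ → Ω → ℕ)
    (hmeas : ∀ i, Measurable (Q i))
    (hindep : iIndepFun Q μ)
    (hpmf : ∀ i q, μ {ω | Q i ω = q} = (1 / 2 : ℝ≥0∞) ^ (q + 1)) :
    ∀ ε : ℝ, 0 < ε → ε < 1 →
      ∃ n₀ : ℕ, ∀ n : ℕ, n₀ ≤ n →
        ∃ S : Finset (Fin n → ℕ),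
          (S.card : ℝ) ≤ 2 ^ ((n : ℝ) * (2 + ε)) ∧
          ENNReal.ofReal (1 - ε) < μ {ω | (fun i : Fin n => Q ((i : ℕ) + 1) ω) ∈ S} ∧
          ∀ q ∈ S,
            ((n : ℝ) * (1 - ε) ≤ ∑ i, (q i : ℝ) ∧ (∑ i, (q i : ℝ)) ≤ (n : ℝ) * (1 + ε)) ∧
            ((3 * n : ℝ) * (1 - ε / 3) ≤ 2 * (n : ℝ) + ∑ i, (q i : ℝ)) := by
  classical
  -- norm of 1/2
  have hnorm : ‖(1 / 2 : ℝ)‖ < 1 := by rw [Real.norm_eq_abs, abs_of_pos] <;> norm_num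
  -- real geometric sums
  have hs1 : HasSum (fun q : ℕ => (q : ℝ) * (1 / 2) ^ (q + 1)) 1 := by
    have h := (hasSum_coe_mul_geometric_of_norm_lt_one hnorm).mul_left (1 / 2)
    have heq : (fun q : ℕ => 1 / 2 * ((q : ℝ) * (1 / 2) ^ q)) =
        fun q : ℕ => (q : ℝ) * (1 / 2) ^ (q + 1) := funext fun q => by ring
    rw [heq] at h
    have e : (1 / 2 * (1 / 2 / (1 - 1 / 2) ^ 2) : ℝ) = 1 := by norm_num
    rw [e] at h
    exact h
  have hs2 : HasSum (fun q : ℕ => (q : ℝ) ^ 2 * (1 / 2) ^ (q + 1)) 3 := by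
    have h2 := hasSum_choose_mul_geometric_of_norm_lt_one (𝕜 := ℝ) 2 hnorm
    have h1 := hasSum_coe_mul_geometric_of_norm_lt_one hnorm
    have h0 := hasSum_geometric_of_norm_lt_one hnorm
    have h := (((h2.mul_left 2).sub (h1.mul_left 3)).sub (h0.mul_left 2)).mul_left (1 / 2)
    have heq : (fun q : ℕ => 1 / 2 * ((2 * (((q + 2).choose 2 : ℝ) * (1 / 2) ^ q) -
        3 * ((q : ℝ) * (1 / 2) ^ q)) - 2 * (1 / 2) ^ q)) =
        fun q : ℕ => (q : ℝ) ^ 2 * (1 / 2) ^ (q + 1) := by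
      funext q
      rw [Nat.cast_choose_two]
      push_cast
      ring
    rw [heq] at h
    have e : (1 / 2 * (2 * (1 / (1 - 1 / 2) ^ (2 + 1)) - 3 * (1 / 2 / (1 - 1 / 2) ^ 2) -
      2 * (1 - 1 / 2)⁻¹) : ℝ) = 3 := by norm_num
    rw [e] at h
    exact h
  -- transfer to ℝ≥0∞
  have hhalf : ENNReal.ofReal (1 / 2 : ℝ) = (1 / 2 : ℝ≥0∞) := by
    rw [ENNReal.ofReal_div_of_pos (by norm_num)]
    norm_num
  have hofReal1 : ∀ q : ℕ, ENNReal.ofReal ((q : ℝ) * (1 / 2) ^ (q + 1)) =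
      (q : ℝ≥0∞) * (1 / 2) ^ (q + 1) := by
    intro q
    rw [ENNReal.ofReal_mul (Nat.cast_nonneg q), ENNReal.ofReal_pow (by norm_num),
      ENNReal.ofReal_natCast, hhalf]
  have hofReal2 : ∀ q : ℕ, ENNReal.ofReal ((q : ℝ) ^ 2 * (1 / 2) ^ (q + 1)) =
      (q : ℝ≥0∞) ^ 2 * (1 / 2) ^ (q + 1) := by
    intro q
    rw [ENNReal.ofReal_mul (by positivity), ENNReal.ofReal_pow (by norm_num),
      ENNReal.ofReal_pow (by positivity), ENNReal.ofReal_natCast, hhalf]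
  have key1 : (∑' q : ℕ, (q : ℝ≥0∞) * (1 / 2) ^ (q + 1)) = 1 := by
    have h := ENNReal.ofReal_tsum_of_nonneg (f := fun q : ℕ => (q : ℝ) * (1 / 2) ^ (q + 1))
      (fun q => by positivity) hs1.summable
    rw [hs1.tsum_eq] at h
    simp only [hofReal1] at h
    rw [← h, ENNReal.ofReal_one]
  have key2 : (∑' q : ℕ, (q : ℝ≥0∞) ^ 2 * (1 / 2) ^ (q + 1)) = 3 := by
    have h := ENNReal.ofReal_tsum_of_nonneg (f := fun q : ℕ => (q : ℝ) ^ 2 * (1 / 2) ^ (q + 1))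
      (fun q => by positivity) hs2.summable
    rw [hs2.tsum_eq] at h
    simp only [hofReal2] at h
    rw [← h]
    norm_num
  -- law of Q k
  have law : ∀ (k : ℕ) (g : ℕ → ℝ≥0∞),
      ∫⁻ ω, g (Q k ω) ∂μ = ∑' q : ℕ, g q * (1 / 2 : ℝ≥0∞) ^ (q + 1) := by
    intro k g
    rw [← lintegral_map measurable_from_nat (hmeas k), lintegral_countable']
    refine tsum_congr fun q => ?_
    rw [Measure.map_apply (hmeas k) (measurableSet_singleton q),
      show Q k ⁻¹' {q} = {ω | Q k ω = q} from rfl, hpmf]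
  have l1 : ∀ k, ∫⁻ ω, (Q k ω : ℝ≥0∞) ∂μ = 1 :=
    fun k => (law k (fun q => (q : ℝ≥0∞))).trans key1
  have l2 : ∀ k, ∫⁻ ω, ((Q k ω : ℝ≥0∞)) ^ 2 ∂μ = 3 :=
    fun k => (law k (fun q => (q : ℝ≥0∞) ^ 2)).trans key2
  -- real moments
  have mX : ∀ k, Measurable fun ω => (Q k ω : ℝ) := fun k => measurable_from_nat.comp (hmeas k)
  have intX : ∀ k, Integrable (fun ω => (Q k ω : ℝ)) μ := by
    intro k
    refine ⟨(mX k).aestronglyMeasurable, ?_⟩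
    rw [hasFiniteIntegral_iff_ofReal (ae_of_all μ fun ω => Nat.cast_nonneg _),
      lintegral_congr (fun ω => ENNReal.ofReal_natCast (Q k ω)), l1 k]
    exact one_lt_top
  have EX : ∀ k, ∫ ω, (Q k ω : ℝ) ∂μ = 1 := by
    intro k
    rw [integral_eq_lintegral_of_nonneg_ae (ae_of_all μ fun ω => Nat.cast_nonneg _)
      (mX k).aestronglyMeasurable,
      lintegral_congr (fun ω => ENNReal.ofReal_natCast (Q k ω)), l1 k]
    simp
  have hofr2 : ∀ k, ∀ ω : Ω, ENNReal.ofReal ((Q k ω : ℝ) ^ 2) = ((Q k ω : ℝ≥0∞)) ^ 2 := by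
    intro k ω
    rw [ENNReal.ofReal_pow (Nat.cast_nonneg _), ENNReal.ofReal_natCast]
  have intX2 : ∀ k, Integrable (fun ω => (Q k ω : ℝ) ^ 2) μ := by
    intro k
    refine ⟨((mX k).pow_const 2).aestronglyMeasurable, ?_⟩
    rw [hasFiniteIntegral_iff_ofReal (ae_of_all μ fun ω => sq_nonneg _),
      lintegral_congr (hofr2 k), l2 k]
    exact (by norm_num : (3 : ℝ≥0∞) < ⊤)
  have EX2 : ∀ k, ∫ ω, (Q k ω : ℝ) ^ 2 ∂μ = 3 := by
    intro k
    rw [integral_eq_lintegral_of_nonneg_ae (ae_of_all μ fun ω => sq_nonneg _)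
      ((mX k).pow_const 2).aestronglyMeasurable,
      lintegral_congr (hofr2 k), l2 k]
    simp
  have memX : ∀ k, MemLp (fun ω => (Q k ω : ℝ)) 2 μ := fun k =>
    (memLp_two_iff_integrable_sq (mX k).aestronglyMeasurable).2 (intX2 k)
  have varX : ∀ k, variance (fun ω => (Q k ω : ℝ)) μ = 2 := by
    intro k
    rw [variance_eq_sub (memX k)]
    simp only [Pi.pow_apply]
    rw [EX2 k, EX k]
    norm_num
  -- main construction
  intro ε hε hε1
  refine ⟨⌈2 / ε ^ 3⌉₊ + 1, fun n hn => ?_⟩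
  have hn1 : 1 ≤ n := le_trans (Nat.le_add_left 1 _) hn
  have hnR : (0 : ℝ) < n := by exact_mod_cast hn1
  have hcrit : 2 / ε ^ 3 < (n : ℝ) := by
    refine lt_of_le_of_lt (Nat.le_ceil _) ?_
    exact_mod_cast Nat.lt_of_lt_of_le (Nat.lt_succ_self _) hn
  set Y : Fin n → Ω → ℝ := fun i ω => (Q ((i : ℕ) + 1) ω : ℝ) with hY
  have hYmem : ∀ i : Fin n, MemLp (Y i) 2 μ := by
    intro i; rw [hY]; exact memX _
  have hYint : ∀ i : Fin n, Integrable (Y i) μ := by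
    intro i; rw [hY]; exact intX _
  have hYmeas : ∀ i : Fin n, Measurable (Y i) := by
    intro i; rw [hY]; exact mX _
  have hYvar : ∀ i : Fin n, variance (Y i) μ = 2 := by
    intro i; rw [hY]; exact varX _
  have hYE : ∀ i : Fin n, ∫ ω, Y i ω ∂μ = 1 := by
    intro i; rw [hY]; exact EX _
  have hYindep : Set.Pairwise ↑(Finset.univ : Finset (Fin n))
      fun i j => IndepFun (Y i) (Y j) μ := by
    intro i _ j _ hij
    have hne : (i : ℕ) + 1 ≠ (j : ℕ) + 1 := by
      intro h
      exact hij (Fin.val_injective (Nat.succ_injective h))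
    have h := (hindep.indepFun hne).comp
      (measurable_from_nat (mα := inferInstance) (f := fun k : ℕ => (k : ℝ)))
      (measurable_from_nat (mα := inferInstance) (f := fun k : ℕ => (k : ℝ)))
    rw [hY]
    exact h
  have hvarT : variance (∑ i, Y i) μ = 2 * n := by
    rw [IndepFun.variance_sum (fun i _ => hYmem i) hYindep,
      Finset.sum_congr rfl fun i _ => hYvar i, Finset.sum_const, Finset.card_univ,
      Fintype.card_fin, nsmul_eq_mul]
    ring
  have hET : μ[∑ i, Y i] = (n : ℝ) := by
    have h1 : μ[∑ i, Y i] = ∫ ω, ∑ i, Y i ω ∂μ := by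
      simp only [Finset.sum_apply]
    rw [h1, integral_finset_sum _ fun i _ => hYint i,
      Finset.sum_congr rfl fun i _ => hYE i]
    simp
  have hc : (0 : ℝ) < n * ε := mul_pos hnR hε
  have hbound : 2 * (n : ℝ) / ((n : ℝ) * ε) ^ 2 < ε := by
    rw [div_lt_iff₀ (by positivity)]
    have h2 : 2 < (n : ℝ) * ε ^ 3 := by
      rw [div_lt_iff₀ (by positivity)] at hcrit
      linarith
    nlinarith
  have chebs : μ {ω | (n : ℝ) * ε ≤ |(∑ i, Y i) ω - (n : ℝ)|} < ENNReal.ofReal ε := by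
    have cheb := meas_ge_le_variance_div_sq (μ := μ) (X := ∑ i, Y i)
      (memLp_finset_sum' Finset.univ fun i _ => hYmem i) hc
    rw [hET, hvarT] at cheb
    exact lt_of_le_of_lt cheb ((ENNReal.ofReal_lt_ofReal_iff hε).2 hbound)
  set m := Nat.floor ((n : ℝ) * (1 + ε)) with hm
  set S : Finset (Fin n → ℕ) := (Fintype.piFinset fun _ : Fin n => Finset.range (m + 1)).filter
      (fun q => (n : ℝ) * (1 - ε) ≤ ∑ i, (q i : ℝ) ∧ (∑ i, (q i : ℝ)) ≤ (n : ℝ) * (1 + ε))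
    with hS
  refine ⟨S, ?_, ?_, ?_⟩
  · -- cardinality
    have hcard : S.card ≤ 2 ^ (m + n) := by
      apply Stmt8Aux.card_le_two_pow
      intro q hq
      have h := (Finset.mem_filter.1 hq).2.2
      rw [hm]
      apply Nat.le_floor
      rw [Nat.cast_sum]
      exact h
    calc (S.card : ℝ) ≤ (2 : ℝ) ^ (m + n) := by exact_mod_cast hcard
      _ = (2 : ℝ) ^ ((m + n : ℕ) : ℝ) := (Real.rpow_natCast 2 (m + n)).symm
      _ ≤ 2 ^ ((n : ℝ) * (2 + ε)) := by
          apply Real.rpow_le_rpow_of_exponent_le one_le_two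
          have hmle : (m : ℝ) ≤ (n : ℝ) * (1 + ε) := by
            rw [hm]; exact Nat.floor_le (by positivity)
          push_cast
          linarith
  · -- probability
    have hBeq : {ω | (fun i : Fin n => Q ((i : ℕ) + 1) ω) ∈ S} =
        {ω | (n : ℝ) * (1 - ε) ≤ ∑ i, Y i ω ∧ (∑ i, Y i ω) ≤ (n : ℝ) * (1 + ε)} := by
      ext ω
      simp only [hS, Set.mem_setOf_eq, Finset.mem_filter, Fintype.mem_piFinset,
        Finset.mem_range, Nat.lt_succ_iff, hY]
      constructor
      · rintro ⟨-, h1, h2⟩; exact ⟨h1, h2⟩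
      · rintro ⟨h1, h2⟩
        refine ⟨fun i => ?_, h1, h2⟩
        have hle : (Q ((i : ℕ) + 1) ω : ℝ) ≤ ∑ j : Fin n, (Q ((j : ℕ) + 1) ω : ℝ) :=
          Finset.single_le_sum (f := fun j : Fin n => (Q ((j : ℕ) + 1) ω : ℝ))
            (fun j _ => Nat.cast_nonneg _) (Finset.mem_univ i)
        rw [hm]
        exact Nat.le_floor (le_trans hle h2)
    have hmt : Measurable fun ω => ∑ i, Y i ω :=
      Finset.measurable_sum _ fun i _ => hYmeas i
    have hmeasB : MeasurableSet
        {ω | (n : ℝ) * (1 - ε) ≤ ∑ i, Y i ω ∧ (∑ i, Y i ω) ≤ (n : ℝ) * (1 + ε)} := by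
      rw [Set.setOf_and]
      exact (measurableSet_le measurable_const hmt).inter (measurableSet_le hmt measurable_const)
    have hsub : {ω | (n : ℝ) * (1 - ε) ≤ ∑ i, Y i ω ∧ (∑ i, Y i ω) ≤ (n : ℝ) * (1 + ε)}ᶜ ⊆
        {ω | (n : ℝ) * ε ≤ |(∑ i, Y i) ω - (n : ℝ)|} := by
      intro ω hω
      simp only [Set.mem_compl_iff, Set.mem_setOf_eq, not_and_or, not_le] at hω
      simp only [Set.mem_setOf_eq, Finset.sum_apply]
      rcases hω with h | h
      · exact le_abs.2 (Or.inr (by linarith))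
      · exact le_abs.2 (Or.inl (by linarith))
    have hcompl : μ {ω | (n : ℝ) * (1 - ε) ≤ ∑ i, Y i ω ∧
        (∑ i, Y i ω) ≤ (n : ℝ) * (1 + ε)}ᶜ < ENNReal.ofReal ε :=
      lt_of_le_of_lt (measure_mono hsub) chebs
    rw [hBeq]
    by_contra hcon
    push_neg at hcon
    have hsum := measure_add_measure_compl (μ := μ) hmeasB
    rw [measure_univ] at hsum
    have hlt : (1 : ℝ≥0∞) < 1 := by
      calc (1 : ℝ≥0∞) = _ + _ := hsum.symm
        _ ≤ ENNReal.ofReal (1 - ε) + _ := add_le_add_left hcon _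
        _ < ENNReal.ofReal (1 - ε) + ENNReal.ofReal ε :=
            ENNReal.add_lt_add_left ofReal_ne_top hcompl
        _ = ENNReal.ofReal 1 := by rw [← ENNReal.ofReal_add (by linarith) hε.le]; norm_num
        _ = 1 := ofReal_one
    exact absurd hlt (lt_irrefl _)
  · -- sum bounds
    intro q hq
    obtain ⟨-, h1, h2⟩ := Finset.mem_filter.1 hq
    exact ⟨⟨h1, h2⟩, by linarith⟩
end

section
/- (Deterministic block reconstruction for ABSG.) Let (x_n)_{n≥1} be a binary sequence, let (y_i)_{i≥0} be its ABSG internal state sequence (y_0 = ∅, y_i = M(y_{i−1}, x_i)), let h_j denote the index of the j-th occurrence of ∅ in (y_i)_{i≥1} (h_0 = 0), q_j := h_j − h_{j−1} − 2, and let z_j be the j-th output bit. Then for every j ≥ 1 for which h_j is defined: if q_j = 0 then x_{h_{j−1}+1} = x_{h_{j−1}+2} = z_j; and if q_j ≥ 1 then x_{h_{j−1}+1} = 1 − z_j, x_{h_{j−1}+1+m} = z_j for all 1 ≤ m ≤ q_j, and x_{h_j} = 1 − z_j. In particular the input block x_{h_{j−1}+1}, …, x_{h_j} is uniquely determined by the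 pair (z_j, q_j), and in all cases x_{h_{j−1}+2} = z_j. -/
/-- **Deterministic block reconstruction for ABSG.** For every `j ≥ 1`
for which `h j` is defined: if `q j = 0` then `x (h (j−1) + 1) = x (h (j−1) + 2) = z j`;
if `q j ≥ 1` then `x (h (j−1) + 1) = ¬ z j`, `x (h (j−1) + 1 + m) = z j` for
`1 ≤ m ≤ q j`, and `x (h j) = ¬ z j`. In all cases `x (h (j−1) + 2) = z j`, so the input
block `x (h (j−1) + 1), …, x (h j)` is uniquely determined by the pair `(z j, q j)`. -/
theorem stmt_16 (x : ℕ → Bool) (j : ℕ) (hj : 1 ≤ j)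
    (hdef : ∀ m : ℕ, 1 ≤ m → m ≤ j →
      Set.Nonempty {i | absgH x (m - 1) < i ∧ absgY x i = none}) :
    (absgQ x j = 0 →
      x (absgH x (j - 1) + 1) = absgZ x j ∧ x (absgH x (j - 1) + 2) = absgZ x j) ∧
    (1 ≤ absgQ x j →
      x (absgH x (j - 1) + 1) = !(absgZ x j) ∧
      (∀ m : ℕ, 1 ≤ m → m ≤ absgQ x j → x (absgH x (j - 1) + 1 + m) = absgZ x j) ∧
      x (absgH x j) = !(absgZ x j)) ∧
    x (absgH x (j - 1) + 2) = absgZ x j := by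
  set h' := absgH x (j - 1) with hh'
  have hjj : j - 1 + 1 = j := Nat.succ_pred_eq_of_pos hj
  have hH : absgH x j = sInf {i | h' < i ∧ absgY x i = none} := by
    conv_lhs => rw [← hjj]
    rfl
  set h := absgH x j with hhdef
  have hS : Set.Nonempty {i | h' < i ∧ absgY x i = none} := hdef j hj le_rfl
  have hmem : h' < h ∧ absgY x h = none := by rw [hH]; exact Nat.sInf_mem hS
  have hnot : ∀ i, h' < i → i < h → absgY x i ≠ none := by
    intro i hi1 hi2 hyi
    have hlt : i < sInf {i | h' < i ∧ absgY x i = none} := by rw [← hH]; exact hi2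
    exact Nat.notMem_of_lt_sInf hlt ⟨hi1, hyi⟩
  have hy0 : absgY x h' = none := by
    rcases Nat.lt_or_ge j 2 with h2 | h2
    · have : j = 1 := by omega
      subst this
      rfl
    · have h1 : 1 ≤ j - 1 := by omega
      have hjj' : j - 1 - 1 + 1 = j - 1 := Nat.succ_pred_eq_of_pos h1
      have hH' : h' = sInf {i | absgH x (j - 1 - 1) < i ∧ absgY x i = none} := by
        rw [hh']; conv_lhs => rw [← hjj']
        rfl
      have := Nat.sInf_mem (hdef (j - 1) h1 (by omega))
      rw [← hH'] at this
      exact this.2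
  set s := x (h' + 1) with hs
  have key : ∀ d, h' + 1 + d < h →
      absgY x (h' + 1 + d) = some s ∧ (1 ≤ d → x (h' + 1 + d) = !s) := by
    intro d
    induction d with
    | zero =>
      intro _
      refine ⟨?_, by omega⟩
      show absgM (absgY x h') (x (h' + 1)) = some s
      rw [hy0]; rfl
    | succ d ih =>
      intro hd
      obtain ⟨hyd, _⟩ := ih (by omega)
      have heq : absgY x (h' + 1 + (d + 1)) = absgM (some s) (x (h' + 1 + (d + 1))) := by
        show absgM (absgY x (h' + 1 + d)) (x (h' + 1 + d + 1)) = _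
        rw [hyd]
        rfl
      by_cases hb : x (h' + 1 + (d + 1)) = s
      · exfalso
        apply hnot (h' + 1 + (d + 1)) (by omega) hd
        rw [heq, hb]; simp [absgM]
      · have hx : x (h' + 1 + (d + 1)) = !s := by
          cases hxv : x (h' + 1 + (d + 1)) <;> cases hsv : s <;> simp_all
        refine ⟨?_, fun _ => hx⟩
        rw [heq, hx]; cases s <;> simp [absgM]
  have h2 : h' + 2 ≤ h := by
    rcases Nat.lt_or_ge (h' + 1) h with hlt | hge
    · omega
    · exfalso
      have h1 : h = h' + 1 := by omega
      have : absgY x (h' + 1) = some s := by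
        show absgM (absgY x h') (x (h' + 1)) = some s
        rw [hy0]; rfl
      rw [← h1] at this
      rw [hmem.2] at this; cases this
  have hq : absgQ x j = h - h' - 2 := by rw [absgQ]
  set q := absgQ x j with hqdef
  have hhq : h = h' + 2 + q := by omega
  have hyh1 : absgY x (h - 1) = some s := by
    have := (key (h - 1 - (h' + 1)) (by omega)).1
    rwa [show h' + 1 + (h - 1 - (h' + 1)) = h - 1 by omega] at this
  have hxh : x h = s := by
    have hh1 : h - 1 + 1 = h := by omega
    have heq : absgY x (h - 1 + 1) = absgM (absgY x (h - 1)) (x (h - 1 + 1)) := rfl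
    rw [hh1, hmem.2, hyh1] at heq
    by_contra hb
    have : (if s = x h then (none : Option Bool) else some s) = none := heq.symm
    rw [if_neg (fun hc => hb hc.symm)] at this
    cases this
  have hz : absgZ x j = if q = 0 then s else !s := by
    rw [absgZ, ← hqdef, ← hhdef, hyh1]
    rfl
  refine ⟨?_, ?_, ?_⟩
  · intro hq0
    rw [hz, if_pos hq0]
    have hh2 : h' + 2 = h := by omega
    exact ⟨rfl, by rw [hh2, hxh]⟩
  · intro hq1
    rw [hz, if_neg (by omega)]
    refine ⟨by simp, fun m hm1 hm2 => ?_, by rw [hxh]; simp⟩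
    exact (key m (by omega)).2 hm1
  · rw [hz]
    by_cases hq0 : q = 0
    · rw [if_pos hq0, show h' + 2 = h by omega, hxh]
    · rw [if_neg hq0]
      have := (key 1 (by omega)).2 le_rfl
      rwa [show h' + 1 + 1 = h' + 2 by omega] at this
end

section
/- Let (X_n)_{n≥1} be independent identically distributed random variables uniform on {0,1} and let (Y_i)_{i≥0} be the ABSG internal state sequence driven by X (Y_0 = ∅, Y_i = M(Y_{i−1}, X_i)). Then for every n ≥ 1 and every m ≥ 0, P( Y_{n+l} ≠ ∅ for all 0 ≤ l ≤ m ) = (2/3) · (1 − (−1/2)^n) · (1/2)^m. In particular this probability is at most (1/2)^m, so for any fixed n the probability that no ∅ occurs among m+1 consecutive states decays exponentially in m. -/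
open MeasureTheory ProbabilityTheory ENNReal

lemma absgY_congr {x x' : ℕ → Bool} : ∀ n, (∀ k ≤ n, x k = x' k) → absgY x n = absgY x' n
  | 0, _ => rfl
  | n+1, h => by
      rw [absgY, absgY, absgY_congr n (fun k hk => h k (hk.trans n.le_succ)), h (n+1) le_rfl]

lemma absgY_run {x : ℕ → Bool} {n : ℕ} {s : Bool} (h : absgY x n = some s) :
    ∀ m, (∀ l, 1 ≤ l → l ≤ m → x (n + l) = !s) → absgY x (n + m) = some s
  | 0, _ => h
  | m+1, hx => by
      have ih := absgY_run h m (fun l h1 h2 => hx l h1 (h2.trans m.le_succ))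
      show absgM (absgY x (n+m)) (x (n+m+1)) = some s
      have hb : x (n+m+1) = !s := hx (m+1) (Nat.succ_le_succ (Nat.zero_le _)) le_rfl
      rw [ih, hb]
      simp [absgM]

lemma absgY_forced {x : ℕ → Bool} {n : ℕ} {s : Bool} (h : absgY x n = some s) :
    ∀ m, (∀ l ≤ m, absgY x (n + l) ≠ none) →
      (absgY x (n + m) = some s ∧ ∀ l, 1 ≤ l → l ≤ m → x (n + l) = !s)
  | 0, _ => ⟨h, fun l h1 h2 => absurd (h1.trans h2) (by omega)⟩
  | m+1, hne => by
      obtain ⟨hY, hX⟩ := absgY_forced h m (fun l hl => hne l (hl.trans m.le_succ))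
      have hne1 : absgM (absgY x (n+m)) (x (n+m+1)) ≠ none := hne (m+1) le_rfl
      rw [hY] at hne1
      have hb : x (n+m+1) = !s := by
        rcases Bool.eq_or_eq_not (x (n+m+1)) s with hh | hh
        · rw [absgM, hh, if_pos rfl] at hne1; exact absurd rfl hne1
        · exact hh
      refine ⟨?_, ?_⟩
      · show absgM (absgY x (n+m)) (x (n+m+1)) = some s
        rw [hY, hb]; simp [absgM]
      · intro l h1 h2
        rcases Nat.lt_or_ge l (m+1) with hl | hl
        · exact hX l h1 (by omega)
        · have : l = m + 1 := by omega
          rw [this]; exact hb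

section Prob

variable {Ω : Type*} [MeasurableSpace Ω] (μ : Measure Ω) [IsProbabilityMeasure μ]
    (X : ℕ → Ω → Bool)

/-- A set defined by a predicate depending only on coordinates `≤ N` is measurable. -/
lemma cyl_measurable (hmeas : ∀ i, Measurable (X i)) (N : ℕ) (F : (ℕ → Bool) → Prop)
    (hF : ∀ x x' : ℕ → Bool, (∀ k ≤ N, x k = x' k) → F x → F x') :
    MeasurableSet {ω | F (fun k => X k ω)} := by
  classical
  set S : Finset ℕ := Finset.range (N+1) with hS
  set A : Set (∀ _ : S, Bool) := {v | F (fun k => if h : k ∈ S then v ⟨k, h⟩ else false)} with hAdef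
  have hkS : ∀ k, k ≤ N → k ∈ S := fun k hk => Finset.mem_range.2 (Nat.lt_succ_of_le hk)
  have hA : {ω | F (fun k => X k ω)} = (fun ω (i : S) => X i.1 ω) ⁻¹' A := by
    ext ω
    constructor
    · intro h
      exact hF _ _ (fun k hk => by simp [hkS k hk]) h
    · intro h
      exact hF _ _ (fun k hk => by simp [hkS k hk]) h
  rw [hA]
  exact (measurable_pi_lambda _ fun i => hmeas i.1) (Set.toFinite A).measurableSet

/-- Independence of an event depending on coordinates `≤ N` from a later coordinate. -/
lemma cyl_indep (hmeas : ∀ i, Measurable (X i))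
    (hindep : iIndepFun X μ)
    (N j : ℕ) (hj : N < j) (F : (ℕ → Bool) → Prop)
    (hF : ∀ x x' : ℕ → Bool, (∀ k ≤ N, x k = x' k) → F x → F x') (b : Bool) :
    μ ({ω | F (fun k => X k ω)} ∩ {ω | X j ω = b})
      = μ {ω | F (fun k => X k ω)} * μ {ω | X j ω = b} := by
  classical
  set S : Finset ℕ := Finset.range (N+1) with hS
  set T : Finset ℕ := {j} with hT
  have hST : Disjoint S T := by
    simp only [hS, hT, Finset.disjoint_singleton_right, Finset.mem_range]
    omega
  have hInd := hindep.indepFun_finset S T hST hmeas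
  set A : Set (∀ _ : S, Bool) := {v | F (fun k => if h : k ∈ S then v ⟨k, h⟩ else false)} with hAdef
  set B : Set (∀ _ : T, Bool) := {v | v ⟨j, Finset.mem_singleton_self j⟩ = b} with hBdef
  have hkS : ∀ k, k ≤ N → k ∈ S := fun k hk => Finset.mem_range.2 (Nat.lt_succ_of_le hk)
  have hA : {ω | F (fun k => X k ω)} = (fun ω (i : S) => X i.1 ω) ⁻¹' A := by
    ext ω
    constructor
    · intro h
      exact hF _ _ (fun k hk => by simp [hkS k hk]) h
    · intro h
      exact hF _ _ (fun k hk => by simp [hkS k hk]) h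
  have hB : {ω | X j ω = b} = (fun ω (i : T) => X i.1 ω) ⁻¹' B := by
    ext ω; simp [hBdef]
  rw [hA, hB]
  exact hInd.measure_inter_preimage_eq_mul A B (Set.toFinite A).measurableSet
    (Set.toFinite B).measurableSet

end Prob
section Prob2

variable {Ω : Type*} [MeasurableSpace Ω] (μ : Measure Ω) [IsProbabilityMeasure μ]
    (X : ℕ → Ω → Bool)

/-- Cylinder predicate: state at time `n` is `some s` and the next `m` bits are all `!s`. -/
def cylG (n : ℕ) (s : Bool) (m : ℕ) : (ℕ → Bool) → Prop :=
  fun x => absgY x n = some s ∧ ∀ l, 1 ≤ l → l ≤ m → x (n + l) = !s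

lemma cylG_dep (n : ℕ) (s : Bool) (m : ℕ) :
    ∀ x x' : ℕ → Bool, (∀ k ≤ n + m, x k = x' k) → cylG n s m x → cylG n s m x' := by
  rintro x x' hxx ⟨h1, h2⟩
  refine ⟨(absgY_congr n (fun k hk => hxx k (by omega))).symm.trans h1, fun l hl1 hl2 => ?_⟩
  exact (hxx (n + l) (by omega)).symm.trans (h2 l hl1 hl2)

lemma stateY_dep (n : ℕ) (y : Option Bool) :
    ∀ x x' : ℕ → Bool, (∀ k ≤ n, x k = x' k) → absgY x n = y → absgY x' n = y :=
  fun _ _ hxx h => (absgY_congr n hxx).symm.trans h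

lemma measurable_stateY (hmeas : ∀ i, Measurable (X i)) (n : ℕ) (y : Option Bool) :
    MeasurableSet {ω | absgY (fun k => X k ω) n = y} :=
  cyl_measurable X hmeas n (fun x => absgY x n = y) (stateY_dep n y)

lemma measure_E (hmeas : ∀ i, Measurable (X i))
    (hindep : iIndepFun X μ)
    (hunif : ∀ i b, μ {ω | X i ω = b} = 1 / 2) (n : ℕ) (s : Bool) :
    ∀ m : ℕ, μ {ω | cylG n s m (fun k => X k ω)}
      = μ {ω | absgY (fun k => X k ω) n = some s} * (1 / 2 : ℝ≥0∞) ^ m := by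
  intro m
  induction m with
  | zero =>
    rw [pow_zero, mul_one]
    congr 1
    ext ω
    simp only [cylG, Set.mem_setOf_eq]
    exact ⟨fun h => h.1, fun h => ⟨h, fun l h1 h2 => absurd (h1.trans h2) (by omega)⟩⟩
  | succ m ih =>
    have hset : {ω | cylG n s (m+1) (fun k => X k ω)}
        = {ω | cylG n s m (fun k => X k ω)} ∩ {ω | X (n+m+1) ω = !s} := by
      ext ω
      simp only [cylG, Set.mem_setOf_eq, Set.mem_inter_iff]
      constructor
      · rintro ⟨h1, h2⟩
        exact ⟨⟨h1, fun l hl1 hl2 => h2 l hl1 (hl2.trans m.le_succ)⟩,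
          h2 (m+1) (by omega) le_rfl⟩
      · rintro ⟨⟨h1, h2⟩, h3⟩
        refine ⟨h1, fun l hl1 hl2 => ?_⟩
        rcases Nat.lt_or_ge l (m+1) with hl | hl
        · exact h2 l hl1 (by omega)
        · have : l = m + 1 := by omega
          subst this
          exact h3
    rw [hset,
      cyl_indep μ X hmeas hindep (n+m) (n+m+1) (by omega) (cylG n s m) (cylG_dep n s m) (!s),
      ih, hunif, pow_succ, mul_assoc]

lemma state_split (n : ℕ) :
    {ω : Ω | absgY (fun k => X k ω) n ≠ none}
      = {ω | absgY (fun k => X k ω) n = some false}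
        ∪ {ω | absgY (fun k => X k ω) n = some true} := by
  ext ω
  rcases h : absgY (fun k => X k ω) n with _ | b
  · simp [h]
  · cases b <;> simp [h]

lemma measure_main (hmeas : ∀ i, Measurable (X i))
    (hindep : iIndepFun X μ)
    (hunif : ∀ i b, μ {ω | X i ω = b} = 1 / 2) (n m : ℕ) :
    μ {ω | ∀ l ≤ m, absgY (fun k => X k ω) (n + l) ≠ none}
      = μ {ω | absgY (fun k => X k ω) n ≠ none} * (1 / 2 : ℝ≥0∞) ^ m := by
  have hdecomp : {ω : Ω | ∀ l ≤ m, absgY (fun k => X k ω) (n + l) ≠ none}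
      = {ω | cylG n false m (fun k => X k ω)} ∪ {ω | cylG n true m (fun k => X k ω)} := by
    ext ω
    simp only [Set.mem_setOf_eq, Set.mem_union]
    constructor
    · intro h
      rcases hY : absgY (fun k => X k ω) n with _ | s
      · exact absurd hY (h 0 (Nat.zero_le m))
      · obtain ⟨_, hX⟩ := absgY_forced hY m h
        cases s
        · exact Or.inl ⟨hY, hX⟩
        · exact Or.inr ⟨hY, hX⟩
    · intro h l hl
      rcases h with ⟨hY, hX⟩ | ⟨hY, hX⟩ <;>
        · rw [absgY_run hY l (fun l' h1 h2 => hX l' h1 (h2.trans hl))]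
          simp
  have hdisj : Disjoint {ω : Ω | cylG n false m (fun k => X k ω)}
      {ω | cylG n true m (fun k => X k ω)} := by
    rw [Set.disjoint_left]
    rintro ω ⟨h1, _⟩ ⟨h2, _⟩
    rw [h1] at h2
    simp at h2
  have hdisj2 : Disjoint {ω : Ω | absgY (fun k => X k ω) n = some false}
      {ω | absgY (fun k => X k ω) n = some true} := by
    rw [Set.disjoint_left]
    rintro ω h1 h2
    simp only [Set.mem_setOf_eq] at h1 h2
    rw [h1] at h2
    simp at h2
  rw [hdecomp, measure_union hdisj
      (cyl_measurable X hmeas (n+m) (cylG n true m) (cylG_dep n true m)),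
    measure_E μ X hmeas hindep hunif, measure_E μ X hmeas hindep hunif,
    state_split, measure_union hdisj2 (measurable_stateY X hmeas n (some true)), add_mul]

lemma measure_none_succ (hmeas : ∀ i, Measurable (X i))
    (hindep : iIndepFun X μ)
    (hunif : ∀ i b, μ {ω | X i ω = b} = 1 / 2) (n : ℕ) :
    μ {ω | absgY (fun k => X k ω) (n + 1) = none}
      = μ {ω | absgY (fun k => X k ω) n ≠ none} * (1 / 2 : ℝ≥0∞) := by
  have hdecomp : {ω : Ω | absgY (fun k => X k ω) (n + 1) = none}
      = ({ω | absgY (fun k => X k ω) n = some false} ∩ {ω | X (n+1) ω = false})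
        ∪ ({ω | absgY (fun k => X k ω) n = some true} ∩ {ω | X (n+1) ω = true}) := by
    ext ω
    simp only [Set.mem_setOf_eq, Set.mem_union, Set.mem_inter_iff]
    show absgM (absgY (fun k => X k ω) n) (X (n+1) ω) = none ↔ _
    rcases hY : absgY (fun k => X k ω) n with _ | s
    · simp [absgM]
    · rcases hb : X (n+1) ω with _ | _ <;> cases s <;> simp [absgM]
  have hdisj : Disjoint ({ω : Ω | absgY (fun k => X k ω) n = some false} ∩ {ω | X (n+1) ω = false})
      ({ω | absgY (fun k => X k ω) n = some true} ∩ {ω | X (n+1) ω = true}) := by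
    rw [Set.disjoint_left]
    rintro ω ⟨h1, _⟩ ⟨h2, _⟩
    simp only [Set.mem_setOf_eq] at h1 h2
    rw [h1] at h2
    simp at h2
  have hm2 : MeasurableSet ({ω : Ω | absgY (fun k => X k ω) n = some true}
      ∩ {ω | X (n+1) ω = true}) :=
    (measurable_stateY X hmeas n (some true)).inter (hmeas (n+1) (measurableSet_singleton true))
  rw [hdecomp, measure_union hdisj hm2,
    cyl_indep μ X hmeas hindep n (n+1) (by omega) _ (stateY_dep n (some false)) false,
    cyl_indep μ X hmeas hindep n (n+1) (by omega) _ (stateY_dep n (some true)) true,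
    hunif, hunif, ← add_mul, state_split]
  congr 1
  rw [measure_union ?_ (measurable_stateY X hmeas n (some true))]
  rw [Set.disjoint_left]
  rintro ω h1 h2
  simp only [Set.mem_setOf_eq] at h1 h2
  rw [h1] at h2
  simp at h2

end Prob2

/-- closed-form auxiliary sequence `a n = P(Y_n = ∅)`. -/
noncomputable def absgAux (n : ℕ) : ℝ := 1/3 + 2/3 * (-(1/2))^n


/-- If `(X n)_{n≥1}` are i.i.d. uniform bits and `(Y i)` is the ABSG
internal state sequence driven by `X`, then for every `n ≥ 1` and `m ≥ 0`,
`P(Y_{n+l} ≠ ∅ for all 0 ≤ l ≤ m) = (2/3)(1 − (−1/2)^n)(1/2)^m ≤ (1/2)^m`. -/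
theorem stmt_18
    {Ω : Type*} [MeasurableSpace Ω] (μ : Measure Ω) [IsProbabilityMeasure μ]
    (X : ℕ → Ω → Bool)
    (hmeas : ∀ i, Measurable (X i))
    (hindep : iIndepFun X μ)
    (hunif : ∀ i b, μ {ω | X i ω = b} = 1 / 2) :
    ∀ n : ℕ, 1 ≤ n → ∀ m : ℕ,
      μ {ω | ∀ l ≤ m, absgY (fun k => X k ω) (n + l) ≠ none}
          = ENNReal.ofReal ((2 / 3) * (1 - (-(1 / 2) : ℝ) ^ n) * (1 / 2) ^ m) ∧
      μ {ω | ∀ l ≤ m, absgY (fun k => X k ω) (n + l) ≠ none} ≤ (1 / 2 : ℝ≥0∞) ^ m := by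
  have hcompl : ∀ n : ℕ, μ {ω | absgY (fun k => X k ω) n ≠ none}
      = 1 - μ {ω | absgY (fun k => X k ω) n = none} := by
    intro n
    have hs : {ω : Ω | absgY (fun k => X k ω) n ≠ none}
        = {ω | absgY (fun k => X k ω) n = none}ᶜ := by
      ext ω; simp
    rw [hs, prob_compl_eq_one_sub (measurable_stateY X hmeas n none)]
  have h12 : (1/2 : ℝ≥0∞) = ENNReal.ofReal (1/2) := by
    rw [ENNReal.ofReal_div_of_pos (by norm_num)]
    norm_num
  have key : ∀ n : ℕ, μ {ω | absgY (fun k => X k ω) n = none} = ENNReal.ofReal (absgAux n)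
      ∧ 0 ≤ absgAux n ∧ absgAux n ≤ 1 := by
    intro n
    induction n with
    | zero =>
      have h0 : absgAux 0 = 1 := by unfold absgAux; norm_num
      have huniv : {ω : Ω | absgY (fun k => X k ω) 0 = none} = Set.univ := by
        ext ω; simp [absgY]
      rw [h0, huniv, measure_univ, ENNReal.ofReal_one]
      norm_num
    | succ n ih =>
      obtain ⟨hp, h0, h1⟩ := ih
      have hrec := measure_none_succ μ X hmeas hindep hunif n
      rw [hcompl n, hp] at hrec
      have hsub : (1 : ℝ≥0∞) - ENNReal.ofReal (absgAux n) = ENNReal.ofReal (1 - absgAux n) := by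
        rw [ENNReal.ofReal_sub 1 h0, ENNReal.ofReal_one]
      have han : absgAux (n+1) = (1 - absgAux n) * (1/2) := by
        unfold absgAux
        rw [pow_succ]
        ring
      refine ⟨?_, ?_, ?_⟩
      · rw [hrec, hsub, h12, ← ENNReal.ofReal_mul (by linarith), ← han]
      · rw [han]; nlinarith
      · rw [han]; nlinarith
  intro n _ m
  obtain ⟨hp, h0, h1⟩ := key n
  have hch : μ {ω | absgY (fun k => X k ω) n ≠ none} = ENNReal.ofReal (1 - absgAux n) := by
    rw [hcompl n, hp, ENNReal.ofReal_sub 1 h0, ENNReal.ofReal_one]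
  have hmain := measure_main μ X hmeas hindep hunif n m
  have hpowpos : (0:ℝ) ≤ (1/2:ℝ)^m := pow_nonneg (by norm_num) m
  have heq : μ {ω | ∀ l ≤ m, absgY (fun k => X k ω) (n + l) ≠ none}
      = ENNReal.ofReal ((1 - absgAux n) * (1/2:ℝ)^m) := by
    rw [hmain, hch, h12, ← ENNReal.ofReal_pow (by norm_num),
      ← ENNReal.ofReal_mul (by linarith)]
  constructor
  · rw [heq]
    congr 1
    unfold absgAux
    ring
  · rw [heq, h12, ← ENNReal.ofReal_pow (by norm_num)]
    exact ENNReal.ofReal_le_ofReal (by nlinarith)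
end
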